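/- arXiv:1301.1506 — 2 statements merged into one kernel-verified Lean document; each statement's English description precedes it below -/
import Mathlib

section
/- Let M be an irreducible Markov chain on a countable state space V, let A ⊆ W be a tail event, and let r ∈ (0, 1/2). For every starting state z ∈ V and every k ≥ 1, the probability that the chain started at z alternates k times between A_r and Z_r — i.e., that there exist times t_0 < t_1 < … < t_k such that the positions Z^{t_0}, Z^{t_1}, …, Z^{t_k} lie alternately in A_r and in Z_r — is less than (2r)^k. -/
open MeasureTheory Filter Set Topology
open scoped Classical

/-- An irreducible Markov chain on a countable state space `V`, given together with
its family of path-space laws `μ z` (the law of the chain started at `z`),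
characterised on cylinder sets by the transition probabilities. -/
structure MarkovChain (V : Type*) [Countable V] [MeasurableSpace V] where
  /-- transition probabilities -/
  p : V → V → ℝ
  p_nonneg : ∀ x y, 0 ≤ p x y
  p_row_sum : ∀ x, HasSum (p x) 1
  irred : ∀ x y : V, ∃ (n : ℕ) (w : ℕ → V),
    w 0 = x ∧ w n = y ∧ ∀ i < n, 0 < p (w i) (w (i + 1))
  /-- the law of the chain started at `z`, on the path space `ℕ → V` -/
  μ : V → Measure (ℕ → V)
  μ_prob : ∀ z, IsProbabilityMeasure (μ z)
  μ_cyl : ∀ (z : V) (n : ℕ) (w : ℕ → V),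
    (μ z {ω : ℕ → V | ∀ i ≤ n, ω i = w i}).toReal =
      if w 0 = z then ∏ i ∈ Finset.range n, p (w i) (w (i + 1)) else 0

variable {V : Type*} [Countable V] [MeasurableSpace V]

/-- `h : V → ℝ` is harmonic if `h x = ∑_y p x y * h y` for every `x`. -/
def IsHarmonic (M : MarkovChain V) (h : V → ℝ) : Prop :=
  ∀ x, HasSum (fun y => M.p x y * h y) (h x)

/-- The event `1^s` that the values of `s` along the trajectory converge to `1`. -/
def oneEvent (s : V → ℝ) : Set (ℕ → V) :=
  {ω | Tendsto (fun n => s (ω n)) atTop (𝓝 1)}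

/-- The event `0^s` that the values of `s` along the trajectory converge to `0`. -/
def zeroEvent (s : V → ℝ) : Set (ℕ → V) :=
  {ω | Tendsto (fun n => s (ω n)) atTop (𝓝 0)}

/-- A harmonic function `s : V → [0,1]` is sharp if, for every starting state,
the values of `s` along the trajectory of the chain converge to `0` or `1`
almost surely. -/
def IsSharp (M : MarkovChain V) (s : V → ℝ) : Prop :=
  IsHarmonic M s ∧ (∀ x, s x ∈ Set.Icc (0 : ℝ) 1) ∧
  ∀ z, ∀ᵐ ω ∂ M.μ z,
    Tendsto (fun n => s (ω n)) atTop (𝓝 0) ∨ Tendsto (fun n => s (ω n)) atTop (𝓝 1)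

/-- A tail event: a measurable event invariant under deleting the first step. -/
def IsTailEvent (A : Set (ℕ → V)) : Prop :=
  MeasurableSet A ∧ (fun ω : ℕ → V => fun n => ω (n + 1)) ⁻¹' A = A

/-- An `M`-boundary: a measurable space `N` with measures `ν z`, `z ∈ V`, and a
measurable, shift-invariant, measure-preserving map `f` from path space to `N`. -/
structure MBoundary (M : MarkovChain V) (N : Type*) [MeasurableSpace N] where
  ν : V → Measure N
  f : (ℕ → V) → N
  f_meas : Measurable f
  shift_inv : ∀ ω : ℕ → V, f (fun n => ω (n + 1)) = f ω
  meas_pres : ∀ (z : V) (X : Set N), MeasurableSet X → ν z X = M.μ z (f ⁻¹' X)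

/-- The `M`-boundary is faithful to a sharp harmonic function `s` if some measurable
`X ⊆ N` satisfies `μ_z (1^s △ f⁻¹ X) = 0` for every `z`. -/
def Faithful {N : Type*} [MeasurableSpace N] (M : MarkovChain V) (B : MBoundary M N)
    (s : V → ℝ) : Prop :=
  ∃ X : Set N, MeasurableSet X ∧ ∀ z, M.μ z (symmDiff (oneEvent s) (B.f ⁻¹' X)) = 0

/-- The `M`-boundary is a realisation of the Poisson boundary: every bounded harmonic
function is the integral of an essentially unique bounded measurable function on `N`,
and conversely integrating any bounded measurable function on `N` gives a bounded
harmonic function. -/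
def IsRealisation {N : Type*} [MeasurableSpace N] (M : MarkovChain V)
    (B : MBoundary M N) : Prop :=
  (∀ h : V → ℝ, IsHarmonic M h → (∃ C, ∀ x, |h x| ≤ C) →
    ∃ hhat : N → ℝ, Measurable hhat ∧ (∃ C, ∀ η, |hhat η| ≤ C) ∧
      (∀ z, h z = ∫ η, hhat η ∂ B.ν z) ∧
      (∀ g : N → ℝ, Measurable g → (∃ C, ∀ η, |g η| ≤ C) →
        (∀ z, h z = ∫ η, g η ∂ B.ν z) → ∀ z, hhat =ᵐ[B.ν z] g)) ∧
  (∀ g : N → ℝ, Measurable g → (∃ C, ∀ η, |g η| ≤ C) →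
    (∃ C, ∀ z, |∫ η, g η ∂ B.ν z| ≤ C) ∧ IsHarmonic M (fun z => ∫ η, g η ∂ B.ν z))

/-- `A_r`: the set of states from which the tail event `A` holds with probability
greater than `1 - r`. -/
def tailBig (M : MarkovChain V) (A : Set (ℕ → V)) (r : ℝ) : Set V :=
  {v | (M.μ v A).toReal > 1 - r}

/-- `Z_r`: the set of states from which the tail event `A` holds with probability
less than `r`. -/
def tailSmall (M : MarkovChain V) (A : Set (ℕ → V)) (r : ℝ) : Set V :=
  {v | (M.μ v A).toReal < r}

/-- The event that a trajectory alternates `k` times between the sets `A` and `Z`: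
there are times `t 0 < t 1 < … < t k` whose positions lie alternately in `A` and
in `Z` (starting with either). -/
def alternatesEvent (A Z : Set V) (k : ℕ) : Set (ℕ → V) :=
  {ω | ∃ t : ℕ → ℕ, StrictMonoOn t (Set.Iic k) ∧
    ((∀ i ≤ k, (Even i → ω (t i) ∈ A) ∧ (¬ Even i → ω (t i) ∈ Z)) ∨
     (∀ i ≤ k, (Even i → ω (t i) ∈ Z) ∧ (¬ Even i → ω (t i) ∈ A)))}

namespace MarkovAux
set_option linter.unusedSectionVars false

open ENNReal

/-- transition weights as extended nonnegative reals -/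
noncomputable def q (M : MarkovChain V) (x y : V) : ℝ≥0∞ := ENNReal.ofReal (M.p x y)

lemma q_rowsum (M : MarkovChain V) (x : V) : ∑' y, q M x y = 1 := by
  have h := M.p_row_sum x
  simp only [q]
  rw [← ENNReal.ofReal_tsum_of_nonneg (M.p_nonneg x) h.summable, h.tsum_eq,
    ENNReal.ofReal_one]

/-- restriction of a path to its first `n+1` positions -/
def res (n : ℕ) (ω : ℕ → V) : Fin (n + 1) → V := fun i => ω i

lemma measurable_res (n : ℕ) : Measurable (res (V := V) n) :=
  measurable_pi_lambda _ fun _ => measurable_pi_apply _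

/-- deleting the first `n` steps of a path -/
def shiftn (n : ℕ) (ω : ℕ → V) : ℕ → V := fun i => ω (i + n)

lemma measurable_shiftn (n : ℕ) : Measurable (shiftn (V := V) n) :=
  measurable_pi_lambda _ fun _ => measurable_pi_apply _

/-- extension of a finite trajectory to an infinite one (constant after time `n`) -/
def ext (n : ℕ) (e : Fin (n + 1) → V) : ℕ → V := fun i => e ⟨min i n, by omega⟩

lemma ext_apply_le {n : ℕ} (e : Fin (n + 1) → V) {i : ℕ} (h : i ≤ n) :
    ext n e i = e ⟨i, by omega⟩ := by
  simp only [ext]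
  congr 1
  exact Fin.ext (by simp [Nat.min_eq_left h])

lemma ext_zero {n : ℕ} (e : Fin (n + 1) → V) : ext n e 0 = e 0 := by
  rw [ext_apply_le e (Nat.zero_le n)]
  exact congrArg e (Fin.ext (by simp))

/-- the weight of a finite trajectory -/
noncomputable def wt (M : MarkovChain V) (n : ℕ) (z : V) (e : Fin (n + 1) → V) : ℝ≥0∞ :=
  if e 0 = z then ∏ i ∈ Finset.range n, q M (ext n e i) (ext n e (i + 1)) else 0

lemma measure_cyl (M : MarkovChain V) (z : V) (n : ℕ) (e : Fin (n + 1) → V) :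
    M.μ z (res n ⁻¹' {e}) = wt M n z e := by
  have hset : res n ⁻¹' {e} = {ω : ℕ → V | ∀ i ≤ n, ω i = ext n e i} := by
    ext ω
    simp only [Set.mem_preimage, Set.mem_singleton_iff, Set.mem_setOf_eq]
    constructor
    · rintro rfl i hi
      rw [ext_apply_le _ hi]; rfl
    · intro h
      funext i
      have h2 := h i.1 (by omega)
      rw [ext_apply_le _ (by omega)] at h2
      simpa [res] using h2
  haveI := M.μ_prob z
  have h := M.μ_cyl z n (ext n e)
  rw [hset]
  have hμ : M.μ z {ω : ℕ → V | ∀ i ≤ n, ω i = ext n e i}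
      = ENNReal.ofReal ((M.μ z {ω : ℕ → V | ∀ i ≤ n, ω i = ext n e i}).toReal) :=
    (ENNReal.ofReal_toReal (measure_ne_top _ _)).symm
  rw [hμ, h, wt, ext_zero]
  split_ifs with hz
  · rw [ENNReal.ofReal_prod_of_nonneg (fun i _ => M.p_nonneg _ _)]
    rfl
  · simp

lemma wt_cons (M : MarkovChain V) (n : ℕ) (z : V) (x : V) (f : Fin (n + 1) → V) :
    wt M (n + 1) z (Fin.cons x f) = if x = z then q M x (f 0) * wt M n (f 0) f else 0 := by
  have hc0 : (Fin.cons x f : Fin (n + 2) → V) 0 = x := rfl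
  have hext0 : ext (n + 1) (Fin.cons x f) 0 = x := by rw [ext_zero, hc0]
  have hext1 : ext (n + 1) (Fin.cons x f) 1 = f 0 := by
    rw [ext_apply_le _ (by omega)]
    have h1 : (⟨1, by omega⟩ : Fin (n + 2)) = Fin.succ 0 := Fin.ext (by simp)
    rw [h1, Fin.cons_succ]
  have hextS : ∀ i : ℕ, ext (n + 1) (Fin.cons x f) (i + 1) = ext n f i := by
    intro i
    simp only [ext]
    have hmin : min (i + 1) (n + 1) = (min i n) + 1 := by omega
    have h1 : (⟨min (i + 1) (n + 1), by omega⟩ : Fin (n + 2))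
        = Fin.succ ⟨min i n, by omega⟩ := Fin.ext (by simp [hmin])
    rw [h1, Fin.cons_succ]
  rw [wt, hc0, Finset.prod_range_succ']
  split_ifs with h
  · rw [hext0, hext1]
    have hprod : ∀ i ∈ Finset.range n,
        q M (ext (n + 1) (Fin.cons x f) (i + 1)) (ext (n + 1) (Fin.cons x f) (i + 1 + 1))
        = q M (ext n f i) (ext n f (i + 1)) := by
      intro i _
      rw [hextS, hextS]
    rw [Finset.prod_congr rfl hprod, wt, if_pos rfl, mul_comm]
  · rfl

lemma tsum_wt_mul (M : MarkovChain V) (n : ℕ) (g : V → ℝ≥0∞) :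
    ∑' f : Fin (n + 1) → V, g (f 0) * wt M n (f 0) f = ∑' x : V, g x := by
  induction n generalizing g with
  | zero =>
    rw [← (Equiv.funUnique (Fin 1) V).symm.tsum_eq (fun f => g (f 0) * wt M 0 (f 0) f)]
    simp [wt, Equiv.funUnique]
  | succ n ih =>
    rw [← (Fin.consEquiv (fun _ : Fin (n + 2) => V)).tsum_eq, ENNReal.tsum_prod']
    have hinner : ∀ a : V,
        (∑' b : Fin (n + 1) → V,
          g ((Fin.consEquiv (fun _ : Fin (n + 2) => V)) (a, b) 0)
            * wt M (n + 1) ((Fin.consEquiv (fun _ : Fin (n + 2) => V)) (a, b) 0)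
              ((Fin.consEquiv (fun _ : Fin (n + 2) => V)) (a, b))) = g a := by
      intro a
      have hb : ∀ b : Fin (n + 1) → V,
          g ((Fin.consEquiv (fun _ : Fin (n + 2) => V)) (a, b) 0)
            * wt M (n + 1) ((Fin.consEquiv (fun _ : Fin (n + 2) => V)) (a, b) 0)
              ((Fin.consEquiv (fun _ : Fin (n + 2) => V)) (a, b))
          = (g a * q M a (b 0)) * wt M n (b 0) b := by
        intro b
        have hcons : (Fin.consEquiv (fun _ : Fin (n + 2) => V)) (a, b) = Fin.cons a b := rfl
        rw [hcons, show (Fin.cons a b : Fin (n + 2) → V) 0 = a from rfl, wt_cons, if_pos rfl]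
        ring
      rw [tsum_congr hb, ih (fun v => g a * q M a v), ENNReal.tsum_mul_left, q_rowsum, mul_one]
    exact tsum_congr hinner

lemma sum1 (M : MarkovChain V) (n : ℕ) (z : V) :
    ∑' e : Fin (n + 1) → V, wt M n z e = 1 := by
  have h : ∀ e : Fin (n + 1) → V, wt M n z e = (if e 0 = z then 1 else 0) * wt M n (e 0) e := by
    intro e
    by_cases h : e 0 = z
    · rw [if_pos h, one_mul, ← h]
    · rw [if_neg h, zero_mul, wt, if_neg h]
  rw [tsum_congr h]
  exact (tsum_wt_mul M n (fun x => if x = z then 1 else 0)).trans (tsum_ite_eq z 1)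

lemma measure_res_preimage_le (M : MarkovChain V) (z : V) (n : ℕ)
    (T : Set (Fin (n + 1) → V)) :
    M.μ z (res n ⁻¹' T) ≤ ∑' e : T, wt M n z (e : Fin (n + 1) → V) := by
  have hcover : res n ⁻¹' T = ⋃ e : T, res n ⁻¹' {(e : Fin (n + 1) → V)} := by
    ext ω
    simp only [Set.mem_preimage, Set.mem_iUnion, Set.mem_singleton_iff]
    exact ⟨fun h => ⟨⟨res n ω, h⟩, rfl⟩, by rintro ⟨e, he⟩; rw [he]; exact e.2⟩
  rw [hcover]
  refine (measure_iUnion_le _).trans ?_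
  exact le_of_eq (tsum_congr fun e => measure_cyl M z n e)

lemma measure_res_preimage (M : MarkovChain V) (z : V) (n : ℕ)
    (T : Set (Fin (n + 1) → V)) :
    M.μ z (res n ⁻¹' T) = ∑' e : T, wt M n z (e : Fin (n + 1) → V) := by
  refine le_antisymm (measure_res_preimage_le M z n T) ?_
  have h1 : M.μ z (res n ⁻¹' Tᶜ) ≤ ∑' e : ↥Tᶜ, wt M n z (e : Fin (n + 1) → V) :=
    measure_res_preimage_le M z n Tᶜ
  have htot : (∑' e : T, wt M n z (e : Fin (n + 1) → V))
      + (∑' e : ↥Tᶜ, wt M n z (e : Fin (n + 1) → V)) = 1 := by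
    rw [Summable.tsum_add_tsum_compl ENNReal.summable ENNReal.summable, sum1]
  haveI := M.μ_prob z
  have huniv : (1 : ℝ≥0∞) ≤ M.μ z (res n ⁻¹' T) + M.μ z (res n ⁻¹' Tᶜ) := by
    have hu : (Set.univ : Set (ℕ → V)) = res n ⁻¹' T ∪ res n ⁻¹' Tᶜ := by
      rw [← Set.preimage_union, Set.union_compl_self, Set.preimage_univ]
    calc (1 : ℝ≥0∞) = M.μ z Set.univ := measure_univ.symm
      _ ≤ _ := by rw [hu]; exact measure_union_le _ _
  have hc : (∑' e : ↥Tᶜ, wt M n z (e : Fin (n + 1) → V)) ≠ ⊤ := by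
    intro hcon
    rw [hcon] at htot
    simp at htot
  rw [ENNReal.eq_sub_of_add_eq hc htot]
  rw [tsub_le_iff_right]
  exact huniv.trans (add_le_add_right h1 _)

/-- concatenation of two finite trajectories (overlapping at position `n`) -/
def glue (n m : ℕ) (e : Fin (n + 1) → V) (f : Fin (m + 1) → V) : Fin (n + m + 1) → V :=
  fun j => if h : j.1 < n then e ⟨j.1, by omega⟩ else f ⟨j.1 - n, by have := j.2; omega⟩

lemma ext_glue (n m : ℕ) (e : Fin (n + 1) → V) (f : Fin (m + 1) → V)
    (hf0 : f 0 = e (Fin.last n)) (i : ℕ) :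
    ext (n + m) (glue n m e f) i = if i ≤ n then ext n e i else ext m f (i - n) := by
  by_cases h1 : i < n
  · rw [if_pos (le_of_lt h1), ext_apply_le _ (by omega : i ≤ n + m), ext_apply_le _ (le_of_lt h1)]
    show glue n m e f ⟨i, _⟩ = e ⟨i, _⟩
    simp only [glue]
    rw [dif_pos h1]
  · by_cases h2 : i ≤ n
    · have hn : i = n := by omega
      subst hn
      rw [if_pos le_rfl, ext_apply_le _ (by omega : i ≤ i + m), ext_apply_le _ le_rfl]
      calc glue i m e f ⟨i, by omega⟩ = f ⟨0, by omega⟩ := by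
            simp only [glue]
            rw [dif_neg (by omega)]
            congr 1
            exact Fin.ext (by simp)
        _ = f 0 := congrArg f (Fin.ext (by simp))
        _ = e (Fin.last i) := hf0
        _ = e ⟨i, by omega⟩ := rfl
    · rw [if_neg h2]
      by_cases h3 : i ≤ n + m
      · rw [ext_apply_le _ h3, ext_apply_le _ (by omega : i - n ≤ m)]
        show glue n m e f ⟨i, _⟩ = f ⟨i - n, _⟩
        simp only [glue]
        rw [dif_neg (by omega)]
      · simp only [ext, glue]
        rw [dif_neg (by omega)]
        congr 1
        exact Fin.ext (by simp; omega)

lemma wt_glue (M : MarkovChain V) (n m : ℕ) (z : V) (e : Fin (n + 1) → V)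
    (f : Fin (m + 1) → V) (hf0 : f 0 = e (Fin.last n)) :
    wt M (n + m) z (glue n m e f) = wt M n z e * wt M m (e (Fin.last n)) f := by
  have hE := ext_glue n m e f hf0
  have hg0 : glue n m e f 0 = e 0 := by
    have h := hE 0
    rw [if_pos (Nat.zero_le n)] at h
    rw [← ext_zero (glue n m e f), h, ext_zero]
  have hE' : ∀ x : ℕ, ext (n + m) (glue n m e f) (n + x) = ext m f x := by
    intro x
    rcases Nat.eq_zero_or_pos x with rfl | hx
    · rw [hE, if_pos (by omega)]
      rw [ext_zero, hf0]
      rw [ext_apply_le _ (by omega : n + 0 ≤ n)]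
      exact congrArg e (Fin.ext (by simp))
    · rw [hE, if_neg (by omega)]
      congr 1
      omega
  simp only [wt, hg0]
  by_cases hz : e 0 = z
  · rw [if_pos hz, if_pos hz, if_pos hf0, Finset.prod_range_add]
    congr 1
    · refine Finset.prod_congr rfl fun i hi => ?_
      have hi' : i < n := Finset.mem_range.mp hi
      rw [hE i, hE (i + 1), if_pos (by omega), if_pos (by omega)]
    · refine Finset.prod_congr rfl fun x _ => ?_
      have hx1 : n + x + 1 = n + (x + 1) := by omega
      rw [hx1, hE' x, hE' (x + 1)]
  · rw [if_neg hz, if_neg hz, zero_mul]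

lemma markov_map (M : MarkovChain V) (z : V) (n : ℕ) (e : Fin (n + 1) → V) (h0 : e 0 = z) :
    Measure.map (shiftn n) ((M.μ z).restrict (res n ⁻¹' {e}))
      = wt M n z e • M.μ (e (Fin.last n)) := by
  haveI := M.μ_prob z
  haveI := M.μ_prob (e (Fin.last n))
  haveI : IsFiniteMeasure (Measure.map (shiftn n) ((M.μ z).restrict (res n ⁻¹' {e}))) := by
    constructor
    rw [Measure.map_apply (measurable_shiftn n) MeasurableSet.univ, Set.preimage_univ,
      Measure.restrict_apply MeasurableSet.univ, Set.univ_inter]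
    exact measure_lt_top _ _
  refine ext_of_generate_finite (measurableCylinders (fun _ : ℕ => V))
    generateFrom_measurableCylinders.symm isPiSystem_measurableCylinders ?_ ?_
  · intro s hs
    obtain ⟨F, S, hS, rfl⟩ := (mem_measurableCylinders s).mp hs
    set m := F.sup id with hm
    have hle : ∀ i ∈ F, i ≤ m := fun i hi => Finset.le_sup (f := id) hi
    set TS : Set (Fin (m + 1) → V) :=
      {f | (fun i : F => f ⟨i.1, Nat.lt_succ_of_le (hle i.1 i.2)⟩) ∈ S} with hTS
    have hTSm : MeasurableSet TS :=
      (measurable_pi_lambda (fun (f : Fin (m + 1) → V) (i : F) =>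
        f ⟨i.1, Nat.lt_succ_of_le (hle i.1 i.2)⟩) fun i => measurable_pi_apply _) hS
    have hcyl : cylinder F S = res m ⁻¹' TS := by
      ext ω
      exact Iff.rfl
    set T' : Set (Fin (n + m + 1) → V) :=
      {w | (fun i : Fin (n + 1) => w (Fin.castLE (by omega) i)) = e ∧
        (fun j : Fin (m + 1) => w ⟨j.1 + n, by have := j.2; omega⟩) ∈ TS} with hT'
    have hset : shiftn n ⁻¹' (res m ⁻¹' TS) ∩ res n ⁻¹' {e} = res (n + m) ⁻¹' T' := by
      ext ω
      simp only [Set.mem_inter_iff, Set.mem_preimage, Set.mem_singleton_iff, hT',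
        Set.mem_setOf_eq]
      exact ⟨fun h => ⟨h.2, h.1⟩, fun h => ⟨h.2, h.1⟩⟩
    -- injectivity of glue
    have hinj : Function.Injective (glue n m e) := by
      intro f g hfg
      funext j
      have h1 := congrFun hfg ⟨j.1 + n, by have := j.2; omega⟩
      simp only [glue] at h1
      rw [dif_neg (by omega), dif_neg (by omega)] at h1
      have h2 : (⟨j.1 + n - n, by have := j.2; omega⟩ : Fin (m + 1)) = j :=
        Fin.ext (by simp)
      rwa [h2] at h1
    have htail : ∀ f : Fin (m + 1) → V,
        (fun j : Fin (m + 1) => glue n m e f ⟨j.1 + n, by have := j.2; omega⟩) = f := by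
      intro f
      funext j
      simp only [glue]
      rw [dif_neg (by omega)]
      exact congrArg f (Fin.ext (by simp))
    have hsupp : Function.support (Set.indicator T' (wt M (n + m) z))
        ⊆ Set.range (glue n m e) := by
      intro w hw
      have hwT : w ∈ T' := by
        by_contra h
        exact hw (Set.indicator_of_notMem h _)
      refine ⟨fun j => w ⟨j.1 + n, by have := j.2; omega⟩, ?_⟩
      funext j
      by_cases hj : j.1 < n
      · simp only [glue]
        rw [dif_pos hj]
        have h1 := congrFun hwT.1 ⟨j.1, by omega⟩
        exact h1.symm.trans (congrArg w (Fin.ext rfl))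
      · simp only [glue]
        rw [dif_neg hj]
        exact congrArg w (Fin.ext (by simp; omega))
    have hpoint : ∀ f : Fin (m + 1) → V,
        Set.indicator T' (wt M (n + m) z) (glue n m e f)
          = wt M n z e * Set.indicator TS (wt M m (e (Fin.last n))) f := by
      intro f
      by_cases hf0 : f 0 = e (Fin.last n)
      · have hmem : glue n m e f ∈ T' ↔ f ∈ TS := by
          constructor
          · intro h
            have := h.2
            rwa [htail f] at this
          · intro h
            refine ⟨?_, by rwa [htail f]⟩
            funext i
            by_cases hi : i.1 < n
            · simp only [glue, Fin.coe_castLE]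
              rw [dif_pos hi]
            · have hieq : i = Fin.last n := Fin.ext (by have := i.2; simp; omega)
              simp only [glue, Fin.coe_castLE]
              rw [dif_neg hi]
              subst hieq
              rw [← hf0]
              exact congrArg f (Fin.ext (by simp))
        by_cases hfTS : f ∈ TS
        · rw [Set.indicator_of_mem (hmem.mpr hfTS) _, Set.indicator_of_mem hfTS _,
            wt_glue M n m z e f hf0]
        · rw [Set.indicator_of_notMem (fun h => hfTS (hmem.mp h)) _,
            Set.indicator_of_notMem hfTS _, mul_zero]
      · have hnot : glue n m e f ∉ T' := by
          intro h
          apply hf0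
          have h1 := congrFun h.1 (Fin.last n)
          simp only [glue, Fin.coe_castLE] at h1
          rw [dif_neg (by simp)] at h1
          rw [← h1]
          exact congrArg f (Fin.ext (by simp))
        rw [Set.indicator_of_notMem hnot _]
        by_cases hfTS : f ∈ TS
        · rw [Set.indicator_of_mem hfTS _]
          have hz0 : wt M m (e (Fin.last n)) f = 0 := by rw [wt, if_neg hf0]
          rw [hz0, mul_zero]
        · rw [Set.indicator_of_notMem hfTS _, mul_zero]
    have hfact : (∑' w : T', wt M (n + m) z (w : Fin (n + m + 1) → V))
        = wt M n z e * ∑' f : TS, wt M m (e (Fin.last n)) (f : Fin (m + 1) → V) := by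
      rw [tsum_subtype, tsum_subtype, ← hinj.tsum_eq hsupp, tsum_congr hpoint,
        ENNReal.tsum_mul_left]
    rw [Measure.map_apply (measurable_shiftn n) (hS.cylinder),
      Measure.restrict_apply ((measurable_shiftn n) (hS.cylinder))]
    rw [show shiftn n ⁻¹' (cylinder F S) ∩ res n ⁻¹' {e}
        = res (n + m) ⁻¹' T' from by rw [hcyl]; exact hset]
    rw [measure_res_preimage, hfact, Measure.smul_apply, smul_eq_mul, hcyl,
      measure_res_preimage]
  · rw [Measure.map_apply (measurable_shiftn n) MeasurableSet.univ, Set.preimage_univ,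
      Measure.restrict_apply MeasurableSet.univ, Set.univ_inter, measure_cyl,
      Measure.smul_apply, smul_eq_mul, measure_univ, mul_one]

lemma measure_inter_shiftn_le (M : MarkovChain V) (z : V) (n : ℕ) (e : Fin (n + 1) → V)
    (E : Set (ℕ → V)) :
    M.μ z (res n ⁻¹' {e} ∩ shiftn n ⁻¹' E) ≤ wt M n z e * M.μ (e (Fin.last n)) E := by
  by_cases h0 : e 0 = z
  · set B := toMeasurable (M.μ (e (Fin.last n))) E with hB
    have hBm : MeasurableSet B := measurableSet_toMeasurable _ _
    have hsub : res n ⁻¹' {e} ∩ shiftn n ⁻¹' E ⊆ shiftn n ⁻¹' B ∩ res n ⁻¹' {e} :=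
      fun ω hω => ⟨Set.preimage_mono (subset_toMeasurable _ _) hω.2, hω.1⟩
    refine (measure_mono hsub).trans (le_of_eq ?_)
    calc M.μ z (shiftn n ⁻¹' B ∩ res n ⁻¹' {e})
        = Measure.map (shiftn n) ((M.μ z).restrict (res n ⁻¹' {e})) B := by
          rw [Measure.map_apply (measurable_shiftn n) hBm,
            Measure.restrict_apply ((measurable_shiftn n) hBm)]
      _ = (wt M n z e • M.μ (e (Fin.last n))) B := by rw [markov_map M z n e h0]
      _ = wt M n z e * M.μ (e (Fin.last n)) B := by rw [Measure.smul_apply, smul_eq_mul]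
      _ = wt M n z e * M.μ (e (Fin.last n)) E := by rw [measure_toMeasurable]
  · have h1 : M.μ z (res n ⁻¹' {e}) = 0 := by
      rw [measure_cyl, wt, if_neg h0]
    calc M.μ z (res n ⁻¹' {e} ∩ shiftn n ⁻¹' E)
        ≤ M.μ z (res n ⁻¹' {e}) := measure_mono Set.inter_subset_left
      _ = 0 := h1
      _ ≤ _ := zero_le

/-- the event of ever hitting the set `S` of states -/
def Hit (S : Set V) : Set (ℕ → V) := {ω | ∃ t, ω t ∈ S}

/-- the event of hitting `S` by time `N` -/
def HitN (S : Set V) (N : ℕ) : Set (ℕ → V) := {ω | ∃ t ≤ N, ω t ∈ S}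

/-- finite trajectories hitting `S` for the first time at their last position -/
def FH (S : Set V) (n : ℕ) : Set (Fin (n + 1) → V) :=
  {e | e (Fin.last n) ∈ S ∧ ∀ i : Fin (n + 1), i.1 < n → e i ∉ S}

lemma hitN_mono (S : Set V) : Monotone (fun N => HitN S N) :=
  fun _ _ hab _ h => by obtain ⟨t, ht, hts⟩ := h; exact ⟨t, ht.trans hab, hts⟩

lemma hit_eq_iUnion (S : Set V) : Hit S = ⋃ N, HitN S N := by
  ext ω
  simp only [Hit, Set.mem_setOf_eq, Set.mem_iUnion, HitN]
  exact ⟨fun ⟨t, ht⟩ => ⟨t, t, le_rfl, ht⟩, fun ⟨_, t, _, ht⟩ => ⟨t, ht⟩⟩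

lemma measure_res_union (M : MarkovChain V) (z : V) (n : ℕ)
    {T T' : Set (Fin (n + 1) → V)} (hd : Disjoint T T') :
    M.μ z (res n ⁻¹' (T ∪ T')) = M.μ z (res n ⁻¹' T) + M.μ z (res n ⁻¹' T') := by
  rw [measure_res_preimage, measure_res_preimage, measure_res_preimage,
    Summable.tsum_union_disjoint hd ENNReal.summable ENNReal.summable]

lemma measure_hitN (M : MarkovChain V) (S : Set V) (z : V) (N : ℕ) :
    M.μ z (HitN S N) = ∑ n ∈ Finset.range (N + 1), M.μ z (res n ⁻¹' FH S n) := by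
  induction N with
  | zero =>
    have h : HitN S 0 = res 0 ⁻¹' FH S 0 := by
      ext ω
      simp only [HitN, Set.mem_setOf_eq, Set.mem_preimage, FH, res]
      constructor
      · rintro ⟨t, ht, hts⟩
        have ht0 : t = 0 := Nat.le_zero.mp ht
        subst ht0
        exact ⟨hts, fun i hi => absurd hi (by omega)⟩
      · intro h
        exact ⟨0, le_rfl, h.1⟩
    rw [h, Finset.sum_range_one]
  | succ N ih =>
    set U1 : Set (Fin (N + 2) → V) := {w | ∃ i : Fin (N + 2), i.1 ≤ N ∧ w i ∈ S} with hU1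
    have hsplit : HitN S (N + 1) = res (N + 1) ⁻¹' (U1 ∪ FH S (N + 1)) := by
      ext ω
      simp only [HitN, Set.mem_setOf_eq, Set.mem_preimage, Set.mem_union, hU1, FH, res]
      constructor
      · rintro ⟨t, ht, hts⟩
        by_cases hh : ∃ t' ≤ N, ω t' ∈ S
        · obtain ⟨t', ht', hts'⟩ := hh
          exact Or.inl ⟨⟨t', by omega⟩, by simpa using ht', hts'⟩
        · push_neg at hh
          right
          have htN : t = N + 1 := by
            rcases Nat.lt_or_ge t (N + 1) with h | h
            · exact absurd hts (hh t (by omega))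
            · omega
          subst htN
          exact ⟨by simpa using hts, fun i hi => hh i.1 (by omega)⟩
      · rintro (⟨i, hi, his⟩ | ⟨hlast, _⟩)
        · exact ⟨i.1, by omega, his⟩
        · exact ⟨N + 1, le_rfl, by simpa using hlast⟩
    have hdisj : Disjoint U1 (FH S (N + 1)) := by
      rw [Set.disjoint_left]
      rintro w ⟨i, hi, his⟩ ⟨_, hint⟩
      exact hint i (by omega) his
    have hU1eq : res (N + 1) ⁻¹' U1 = HitN S N := by
      ext ω
      simp only [Set.mem_preimage, hU1, Set.mem_setOf_eq, HitN, res]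
      constructor
      · rintro ⟨i, hi, his⟩; exact ⟨i.1, hi, his⟩
      · rintro ⟨t, ht, hts⟩; exact ⟨⟨t, by omega⟩, by simpa using ht, hts⟩
    rw [hsplit, measure_res_union M z _ hdisj, hU1eq, ih, Finset.sum_range_succ,
      Finset.sum_range_succ, Finset.sum_range_succ]

lemma measure_hit (M : MarkovChain V) (S : Set V) (z : V) :
    M.μ z (Hit S) = ∑' n, M.μ z (res n ⁻¹' FH S n) := by
  rw [hit_eq_iUnion, (hitN_mono S).measure_iUnion]
  have h1 : ∀ N, M.μ z (HitN S N) = ∑ n ∈ Finset.range (N + 1), M.μ z (res n ⁻¹' FH S n) :=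
    measure_hitN M S z
  rw [iSup_congr h1]
  apply le_antisymm
  · exact iSup_le fun N => ENNReal.sum_le_tsum _
  · rw [ENNReal.tsum_eq_iSup_sum]
    refine iSup_le fun s => ?_
    rcases s.eq_empty_or_nonempty with rfl | hs
    · simp
    · obtain ⟨N, hN⟩ := s.exists_le
      refine le_iSup_of_le N (Finset.sum_le_sum_of_subset fun x hx => ?_)
      exact Finset.mem_range.mpr (by have := hN x hx; omega)

lemma measure_hitN_add_compl (M : MarkovChain V) (S : Set V) (z : V) (N : ℕ) :
    M.μ z ((HitN S N)ᶜ) + M.μ z (HitN S N) = 1 := by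
  set TN : Set (Fin (N + 1) → V) := {w | ∃ i, w i ∈ S} with hTN
  have h1 : HitN S N = res N ⁻¹' TN := by
    ext ω
    simp only [HitN, Set.mem_setOf_eq, Set.mem_preimage, hTN, res]
    exact ⟨fun ⟨t, ht, hts⟩ => ⟨⟨t, by omega⟩, hts⟩, fun ⟨i, his⟩ => ⟨i.1, by omega, his⟩⟩
  have h2 : (HitN S N)ᶜ = res N ⁻¹' TNᶜ := by rw [h1, Set.preimage_compl]
  rw [h2, h1, measure_res_preimage, measure_res_preimage, add_comm,
    Summable.tsum_add_tsum_compl ENNReal.summable ENNReal.summable, sum1]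

lemma shiftn_preimage (A : Set (ℕ → V))
    (hA : (fun ω : ℕ → V => fun n => ω (n + 1)) ⁻¹' A = A) :
    ∀ n, shiftn n ⁻¹' A = A := by
  intro n
  induction n with
  | zero => ext ω; exact Iff.rfl
  | succ n ih =>
    have hcomp : shiftn (n + 1) = (fun ω : ℕ → V => fun i => ω (i + 1)) ∘ shiftn n := by
      funext ω i
      exact congrArg ω (by omega)
    rw [hcomp, Set.preimage_comp, hA, ih]

lemma crossing (M : MarkovChain V) (A' : Set (ℕ → V))
    (hinv : (fun ω : ℕ → V => fun n => ω (n + 1)) ⁻¹' A' = A')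
    {r : ℝ} (hr0 : 0 < r) (hr1 : r < 1 / 2) (S : Set V)
    (hS : ∀ s ∈ S, M.μ s A' ≤ ENNReal.ofReal r) (v : V)
    (hv : ENNReal.ofReal (1 - r) ≤ M.μ v A') :
    M.μ v (Hit S) ≤ ENNReal.ofReal (r / (1 - r)) := by
  haveI := M.μ_prob v
  have hshift := shiftn_preimage A' hinv
  have hcov : A' ∩ Hit S ⊆ ⋃ (n : ℕ), ⋃ (e : FH S n),
      (res n ⁻¹' {(e : Fin (n + 1) → V)} ∩ shiftn n ⁻¹' A') := by
    rintro ω ⟨hωA, t, ht⟩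
    have hex : ∃ t, ω t ∈ S := ⟨t, ht⟩
    have hfh : res (Nat.find hex) ω ∈ FH S (Nat.find hex) := by
      refine ⟨Nat.find_spec hex, fun i hi his => ?_⟩
      exact Nat.find_min hex hi his
    refine Set.mem_iUnion.mpr ⟨Nat.find hex,
      Set.mem_iUnion.mpr ⟨⟨res (Nat.find hex) ω, hfh⟩, rfl, ?_⟩⟩
    show ω ∈ shiftn (Nat.find hex) ⁻¹' A'
    rw [hshift]
    exact hωA
  have hstep1 : M.μ v (A' ∩ Hit S) ≤ ENNReal.ofReal r * M.μ v (Hit S) := by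
    refine ((measure_mono hcov).trans (measure_iUnion_le _)).trans ?_
    have hbound : ∀ n : ℕ,
        M.μ v (⋃ (e : FH S n), (res n ⁻¹' {(e : Fin (n + 1) → V)} ∩ shiftn n ⁻¹' A'))
          ≤ ENNReal.ofReal r * M.μ v (res n ⁻¹' FH S n) := by
      intro n
      refine (measure_iUnion_le _).trans ?_
      have h1 : ∀ e : FH S n,
          M.μ v (res n ⁻¹' {(e : Fin (n + 1) → V)} ∩ shiftn n ⁻¹' A')
            ≤ wt M n v (e : Fin (n + 1) → V) * ENNReal.ofReal r := by
        intro e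
        refine (measure_inter_shiftn_le M v n e A').trans ?_
        exact mul_le_mul_right (hS _ e.2.1) _
      refine (Summable.tsum_le_tsum h1 ENNReal.summable ENNReal.summable).trans (le_of_eq ?_)
      rw [ENNReal.tsum_mul_right, measure_res_preimage, mul_comm]
    refine (Summable.tsum_le_tsum hbound ENNReal.summable ENNReal.summable).trans (le_of_eq ?_)
    rw [ENNReal.tsum_mul_left, ← measure_hit]
  have hstep2 : ∀ N : ℕ,
      M.μ v A' ≤ ENNReal.ofReal r * M.μ v (Hit S) + M.μ v ((HitN S N)ᶜ) := by
    intro N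
    have hsub : A' ⊆ (A' ∩ Hit S) ∪ (HitN S N)ᶜ := by
      intro ω hω
      by_cases h : ω ∈ Hit S
      · exact Or.inl ⟨hω, h⟩
      · exact Or.inr fun hc => h (by obtain ⟨t, _, ht⟩ := hc; exact ⟨t, ht⟩)
    exact ((measure_mono hsub).trans (measure_union_le _ _)).trans
      (add_le_add_left hstep1 _)
  set P := (M.μ v (Hit S)).toReal with hP
  have hfin : M.μ v (Hit S) ≠ ⊤ := measure_ne_top _ _
  have hmono : Monotone fun N => M.μ v (HitN S N) :=
    fun a b hab => measure_mono (hitN_mono S hab)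
  have hsup : (⨆ N, M.μ v (HitN S N)) = M.μ v (Hit S) := by
    rw [hit_eq_iUnion, (hitN_mono S).measure_iUnion]
  have htend : Filter.Tendsto (fun N => (M.μ v (HitN S N)).toReal)
      Filter.atTop (nhds P) := by
    have h1 : Filter.Tendsto (fun N => M.μ v (HitN S N)) Filter.atTop
        (nhds (M.μ v (Hit S))) := by
      rw [← hsup]
      exact tendsto_atTop_iSup hmono
    exact (ENNReal.tendsto_toReal hfin).comp h1
  have hr1' : (0 : ℝ) < 1 - r := by linarith
  have hkey : ∀ N, (1 - r) + (M.μ v (HitN S N)).toReal ≤ r * P + 1 := by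
    intro N
    have hsN1 : M.μ v (HitN S N) ≤ 1 := prob_le_one
    have h3 : M.μ v A' + M.μ v (HitN S N)
        ≤ ENNReal.ofReal r * M.μ v (Hit S) + 1 := by
      calc M.μ v A' + M.μ v (HitN S N)
          ≤ (ENNReal.ofReal r * M.μ v (Hit S) + M.μ v ((HitN S N)ᶜ))
              + M.μ v (HitN S N) := add_le_add_left (hstep2 N) _
        _ = ENNReal.ofReal r * M.μ v (Hit S)
              + (M.μ v ((HitN S N)ᶜ) + M.μ v (HitN S N)) := by rw [add_assoc]
        _ = ENNReal.ofReal r * M.μ v (Hit S) + 1 := by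
              rw [measure_hitN_add_compl]
    have hlhs : ENNReal.ofReal (1 - r) + M.μ v (HitN S N)
        ≤ ENNReal.ofReal r * M.μ v (Hit S) + 1 :=
      (add_le_add_left hv _).trans h3
    have hfin2 : ENNReal.ofReal r * M.μ v (Hit S) + 1 ≠ ⊤ := by
      refine ENNReal.add_ne_top.mpr ⟨ENNReal.mul_ne_top ENNReal.ofReal_ne_top hfin, ?_⟩
      exact ENNReal.one_ne_top
    have := ENNReal.toReal_mono hfin2 hlhs
    rw [ENNReal.toReal_add ENNReal.ofReal_ne_top (measure_ne_top _ _),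
      ENNReal.toReal_add (ENNReal.mul_ne_top ENNReal.ofReal_ne_top hfin)
        ENNReal.one_ne_top,
      ENNReal.toReal_mul, ENNReal.toReal_ofReal (le_of_lt hr0),
      ENNReal.toReal_ofReal (le_of_lt hr1'), ENNReal.toReal_one] at this
    exact this
  have hlim : (1 - r) + P ≤ r * P + 1 := by
    refine le_of_tendsto (Filter.Tendsto.const_add (1 - r) htend) ?_
    exact Filter.Eventually.of_forall hkey
  have hPle : P ≤ r / (1 - r) := by
    rw [le_div_iff₀ hr1']
    nlinarith
  calc M.μ v (Hit S) = ENNReal.ofReal P := (ENNReal.ofReal_toReal hfin).symm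
    _ ≤ ENNReal.ofReal (r / (1 - r)) := ENNReal.ofReal_le_ofReal hPle

/-- the event of `j` alternating points, starting in `S b` -/
def Ev (S : Bool → Set V) (j : ℕ) (b : Bool) : Set (ℕ → V) :=
  {ω | ∃ t : Fin j → ℕ, StrictMono t ∧
    ∀ i : Fin j, ω (t i) ∈ (if Even i.1 then S b else S (!b))}

lemma Ev_one (S : Bool → Set V) (b : Bool) : Ev S 1 b = Hit (S b) := by
  ext ω
  simp only [Ev, Set.mem_setOf_eq, Hit]
  constructor
  · rintro ⟨t, _, hp⟩
    refine ⟨t 0, ?_⟩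
    have h := hp 0
    simpa using h
  · rintro ⟨t, ht⟩
    refine ⟨fun _ => t, ?_, ?_⟩
    · intro a c hac
      have h1 := a.2
      have h2 := c.2
      rw [Fin.lt_def] at hac
      omega
    · intro i
      have hi : i = 0 := Subsingleton.elim _ _
      subst hi
      simpa using ht

lemma Ev_cover (S : Bool → Set V) (j : ℕ) (b : Bool) :
    Ev S (j + 1) b ⊆ ⋃ (n : ℕ), ⋃ (e : FH (S b) n),
      (res n ⁻¹' {(e : Fin (n + 1) → V)} ∩ shiftn n ⁻¹' (Ev S j (!b))) := by
  rintro ω ⟨t, hmono, hp⟩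
  have h0 : ω (t 0) ∈ S b := by
    have h := hp 0
    simpa using h
  have hex : ∃ m, ω m ∈ S b := ⟨t 0, h0⟩
  have hfh : res (Nat.find hex) ω ∈ FH (S b) (Nat.find hex) :=
    ⟨Nat.find_spec hex, fun i hi his => Nat.find_min hex hi his⟩
  have hnle : Nat.find hex ≤ t 0 := Nat.find_min' hex h0
  refine Set.mem_iUnion.mpr ⟨Nat.find hex,
    Set.mem_iUnion.mpr ⟨⟨res (Nat.find hex) ω, hfh⟩, rfl, ?_⟩⟩
  show shiftn (Nat.find hex) ω ∈ Ev S j (!b)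
  refine ⟨fun i => t i.succ - Nat.find hex, ?_, ?_⟩
  · intro a c hac
    have h1 : t a.succ < t c.succ := hmono (by rw [Fin.succ_lt_succ_iff]; exact hac)
    have h2 : Nat.find hex ≤ t a.succ := hnle.trans (hmono (Fin.succ_pos a)).le
    show t a.succ - Nat.find hex < t c.succ - Nat.find hex
    omega
  · intro i
    have hge : Nat.find hex ≤ t i.succ := hnle.trans (hmono (Fin.succ_pos i)).le
    have heq : shiftn (Nat.find hex) ω (t i.succ - Nat.find hex) = ω (t i.succ) :=
      congrArg ω (by omega)
    rw [heq]
    have hmem := hp i.succ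
    have hsv : (i.succ : Fin (j + 1)).1 = i.1 + 1 := rfl
    rw [hsv] at hmem
    by_cases he : Even i.1
    · rw [if_pos he]
      rw [if_neg (fun hc => (Nat.even_add_one.mp hc) he)] at hmem
      exact hmem
    · rw [if_neg he, Bool.not_not]
      rw [if_pos (Nat.even_add_one.mpr he)] at hmem
      exact hmem

lemma Ev_bound (M : MarkovChain V) (S : Bool → Set V) {r : ℝ} (hr0 : 0 < r)
    (hr1 : r < 1 / 2)
    (hcross : ∀ (b : Bool) (v : V), v ∈ S (!b) →
      M.μ v (Hit (S b)) ≤ ENNReal.ofReal (r / (1 - r))) :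
    ∀ (j : ℕ) (b : Bool) (v : V), v ∈ S (!b) →
      M.μ v (Ev S (j + 1) b)
        ≤ ENNReal.ofReal (r / (1 - r)) * ENNReal.ofReal (2 * r) ^ j := by
  have hcd : ENNReal.ofReal (r / (1 - r)) ≤ ENNReal.ofReal (2 * r) := by
    refine ENNReal.ofReal_le_ofReal ?_
    rw [div_le_iff₀ (by linarith)]
    nlinarith
  intro j
  induction j with
  | zero =>
    intro b v hv
    rw [pow_zero, mul_one, Ev_one]
    exact hcross b v hv
  | succ j ih =>
    intro b v hv
    refine ((measure_mono (Ev_cover S (j + 1) b)).trans (measure_iUnion_le _)).trans ?_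
    have hbound : ∀ n : ℕ,
        M.μ v (⋃ (e : FH (S b) n),
          (res n ⁻¹' {(e : Fin (n + 1) → V)} ∩ shiftn n ⁻¹' (Ev S (j + 1) (!b))))
          ≤ (ENNReal.ofReal (r / (1 - r)) * ENNReal.ofReal (2 * r) ^ j)
            * M.μ v (res n ⁻¹' FH (S b) n) := by
      intro n
      refine (measure_iUnion_le _).trans ?_
      have h1 : ∀ e : FH (S b) n,
          M.μ v (res n ⁻¹' {(e : Fin (n + 1) → V)} ∩ shiftn n ⁻¹' (Ev S (j + 1) (!b)))
            ≤ wt M n v (e : Fin (n + 1) → V)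
              * (ENNReal.ofReal (r / (1 - r)) * ENNReal.ofReal (2 * r) ^ j) := by
        intro e
        refine (measure_inter_shiftn_le M v n e _).trans ?_
        refine mul_le_mul_right ?_ _
        exact ih (!b) ((e : Fin (n + 1) → V) (Fin.last n)) (by rw [Bool.not_not]; exact e.2.1)
      refine (Summable.tsum_le_tsum h1 ENNReal.summable ENNReal.summable).trans (le_of_eq ?_)
      rw [ENNReal.tsum_mul_right, measure_res_preimage, mul_comm]
    refine (Summable.tsum_le_tsum hbound ENNReal.summable ENNReal.summable).trans ?_
    rw [ENNReal.tsum_mul_left, ← measure_hit]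
    haveI := M.μ_prob v
    calc (ENNReal.ofReal (r / (1 - r)) * ENNReal.ofReal (2 * r) ^ j) * M.μ v (Hit (S b))
        ≤ (ENNReal.ofReal (r / (1 - r)) * ENNReal.ofReal (2 * r) ^ j)
            * ENNReal.ofReal (r / (1 - r)) := mul_le_mul_right (hcross b v hv) _
      _ ≤ (ENNReal.ofReal (r / (1 - r)) * ENNReal.ofReal (2 * r) ^ j)
            * ENNReal.ofReal (2 * r) := mul_le_mul_right hcd _
      _ = ENNReal.ofReal (r / (1 - r)) * ENNReal.ofReal (2 * r) ^ (j + 1) := by ring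

end MarkovAux

/-- For a tail event `A` and `r ∈ (0, 1/2)`, the probability that the
chain started at `z` alternates `k` times between `A_r` and `Z_r` is less than
`(2r)^k`. -/
theorem alternation_prob (M : MarkovChain V) (A : Set (ℕ → V)) (hA : IsTailEvent A)
    (r : ℝ) (hr : r ∈ Set.Ioo (0 : ℝ) (1/2)) (z : V) (k : ℕ) (hk : 1 ≤ k) :
    (M.μ z (alternatesEvent (tailBig M A r) (tailSmall M A r) k)).toReal
      < (2 * r) ^ k := by
  obtain ⟨hr0, hr1⟩ := hr
  haveI := M.μ_prob z
  have hAm := hA.1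
  have hAinv := hA.2
  set Big := tailBig M A r with hBigdef
  set Small := tailSmall M A r with hSmalldef
  set SB : Bool → Set V := fun b => cond b Big Small with hSBdef
  have hBig' : ∀ v ∈ Big, ENNReal.ofReal (1 - r) ≤ M.μ v A := by
    intro v hv
    haveI := M.μ_prob v
    have h1 : 1 - r ≤ (M.μ v A).toReal := le_of_lt hv
    calc ENNReal.ofReal (1 - r) ≤ ENNReal.ofReal ((M.μ v A).toReal) :=
          ENNReal.ofReal_le_ofReal h1
      _ = M.μ v A := ENNReal.ofReal_toReal (measure_ne_top _ _)
  have hSmall' : ∀ v ∈ Small, M.μ v A ≤ ENNReal.ofReal r := by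
    intro v hv
    haveI := M.μ_prob v
    calc M.μ v A = ENNReal.ofReal ((M.μ v A).toReal) :=
          (ENNReal.ofReal_toReal (measure_ne_top _ _)).symm
      _ ≤ ENNReal.ofReal r := ENNReal.ofReal_le_ofReal (le_of_lt hv)
  have hcompl : ∀ v : V, M.μ v Aᶜ = 1 - M.μ v A := by
    intro v
    haveI := M.μ_prob v
    rw [measure_compl hAm (measure_ne_top _ _), measure_univ]
  have hAinvc : (fun ω : ℕ → V => fun n => ω (n + 1)) ⁻¹' Aᶜ = Aᶜ := by
    rw [Set.preimage_compl, hAinv]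
  have hcross : ∀ (b : Bool) (v : V), v ∈ SB (!b) →
      M.μ v (MarkovAux.Hit (SB b)) ≤ ENNReal.ofReal (r / (1 - r)) := by
    intro b v hv
    cases b with
    | false =>
      exact MarkovAux.crossing M A hAinv hr0 hr1 Small (fun s hs => hSmall' s hs) v
        (hBig' v hv)
    | true =>
      refine MarkovAux.crossing M Aᶜ hAinvc hr0 hr1 Big ?_ v ?_
      · intro s hs
        rw [hcompl s]
        calc 1 - M.μ s A ≤ 1 - ENNReal.ofReal (1 - r) := tsub_le_tsub_left (hBig' s hs) 1
          _ = ENNReal.ofReal 1 - ENNReal.ofReal (1 - r) := by rw [ENNReal.ofReal_one]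
          _ = ENNReal.ofReal (1 - (1 - r)) := (ENNReal.ofReal_sub 1 (by linarith)).symm
          _ = ENNReal.ofReal r := by norm_num
      · rw [hcompl v]
        calc ENNReal.ofReal (1 - r)
            = ENNReal.ofReal 1 - ENNReal.ofReal r := by
              rw [← ENNReal.ofReal_sub 1 (le_of_lt hr0)]
          _ = 1 - ENNReal.ofReal r := by rw [ENNReal.ofReal_one]
          _ ≤ 1 - M.μ v A := tsub_le_tsub_left (hSmall' v hv) 1
  have hdisj : ∀ v, v ∈ Big → v ∉ Small := by
    intro v h1 h2
    simp only [hBigdef, tailBig, Set.mem_setOf_eq] at h1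
    simp only [hSmalldef, tailSmall, Set.mem_setOf_eq] at h2
    linarith
  have hcover : alternatesEvent Big Small k ⊆ ⋃ (n : ℕ),
      ⋃ (e : MarkovAux.FH (Big ∪ Small) n),
      (MarkovAux.res n ⁻¹' {(e : Fin (n + 1) → V)} ∩ MarkovAux.shiftn n ⁻¹'
        (MarkovAux.Ev SB k
          (if (e : Fin (n + 1) → V) (Fin.last n) ∈ Big then false else true))) := by
    rintro ω ⟨t, hmono, hpat⟩
    have h0k : (0 : ℕ) ∈ Set.Iic k := Set.mem_Iic.mpr (Nat.zero_le k)
    have hU0 : ω (t 0) ∈ Big ∪ Small := by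
      rcases hpat with h | h
      · exact Or.inl ((h 0 (Nat.zero_le k)).1 Even.zero)
      · exact Or.inr ((h 0 (Nat.zero_le k)).1 Even.zero)
    have hex : ∃ m, ω m ∈ Big ∪ Small := ⟨t 0, hU0⟩
    have hfh : MarkovAux.res (Nat.find hex) ω ∈ MarkovAux.FH (Big ∪ Small) (Nat.find hex) :=
      ⟨Nat.find_spec hex, fun i hi his => Nat.find_min hex hi his⟩
    have hnle : Nat.find hex ≤ t 0 := Nat.find_min' hex hU0
    refine Set.mem_iUnion.mpr ⟨Nat.find hex,
      Set.mem_iUnion.mpr ⟨⟨MarkovAux.res (Nat.find hex) ω, hfh⟩, rfl, ?_⟩⟩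
    show MarkovAux.shiftn (Nat.find hex) ω ∈ MarkovAux.Ev SB k
      (if MarkovAux.res (Nat.find hex) ω (Fin.last (Nat.find hex)) ∈ Big then false else true)
    by_cases hb : ω (Nat.find hex) ∈ Big
    · rw [if_pos (show MarkovAux.res (Nat.find hex) ω (Fin.last (Nat.find hex)) ∈ Big from hb)]
      rcases hpat with h | h
      · -- pattern starting in Big: use times shifted by one
        refine ⟨fun i => t (i.1 + 1) - Nat.find hex, ?_, ?_⟩
        · intro a c hac
          rw [Fin.lt_def] at hac
          have h1 : t (a.1 + 1) < t (c.1 + 1) :=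
            hmono (Set.mem_Iic.mpr (by have := a.2; omega))
              (Set.mem_Iic.mpr (by have := c.2; omega)) (by omega)
          have h2 : Nat.find hex ≤ t (a.1 + 1) :=
            hnle.trans (hmono h0k (Set.mem_Iic.mpr (by have := a.2; omega)) (by omega)).le
          show t (a.1 + 1) - Nat.find hex < t (c.1 + 1) - Nat.find hex
          omega
        · intro i
          have hik : i.1 + 1 ≤ k := i.2
          have hge : Nat.find hex ≤ t (i.1 + 1) :=
            hnle.trans (hmono h0k (Set.mem_Iic.mpr hik) (by omega)).le
          show MarkovAux.shiftn (Nat.find hex) ω (t (i.1 + 1) - Nat.find hex)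
            ∈ (if Even i.1 then SB false else SB (!false))
          have heq : MarkovAux.shiftn (Nat.find hex) ω (t (i.1 + 1) - Nat.find hex)
              = ω (t (i.1 + 1)) := congrArg ω (by omega)
          rw [heq]
          by_cases he : Even i.1
          · rw [if_pos he]
            exact (h (i.1 + 1) hik).2 (fun hc => (Nat.even_add_one.mp hc) he)
          · rw [if_neg he]
            exact (h (i.1 + 1) hik).1 (Nat.even_add_one.mpr he)
      · -- pattern starting in Small but first hit in Big: keep times
        have ht0 : ω (t 0) ∈ Small := (h 0 (Nat.zero_le k)).1 Even.zero
        have hlt0 : Nat.find hex < t 0 := by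
          rcases Nat.lt_or_ge (Nat.find hex) (t 0) with hlt | hge
          · exact hlt
          · have heq0 : Nat.find hex = t 0 := by omega
            rw [heq0] at hb
            exact absurd ht0 (hdisj _ hb)
        refine ⟨fun i => t i.1 - Nat.find hex, ?_, ?_⟩
        · intro a c hac
          rw [Fin.lt_def] at hac
          have h1 : t a.1 < t c.1 :=
            hmono (Set.mem_Iic.mpr (by have := a.2; omega))
              (Set.mem_Iic.mpr (by have := c.2; omega)) hac
          have h2 : Nat.find hex ≤ t a.1 := by
            rcases Nat.eq_zero_or_pos a.1 with ha0 | hapos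
            · rw [ha0]; exact hlt0.le
            · exact (hlt0.trans
                (hmono h0k (Set.mem_Iic.mpr (by have := a.2; omega)) hapos)).le
          show t a.1 - Nat.find hex < t c.1 - Nat.find hex
          omega
        · intro i
          have hik : i.1 ≤ k := le_of_lt i.2
          have hge : Nat.find hex ≤ t i.1 := by
            rcases Nat.eq_zero_or_pos i.1 with hi0 | hipos
            · rw [hi0]; exact hlt0.le
            · exact (hlt0.trans (hmono h0k (Set.mem_Iic.mpr hik) hipos)).le
          show MarkovAux.shiftn (Nat.find hex) ω (t i.1 - Nat.find hex)
            ∈ (if Even i.1 then SB false else SB (!false))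
          have heq : MarkovAux.shiftn (Nat.find hex) ω (t i.1 - Nat.find hex)
              = ω (t i.1) := congrArg ω (by omega)
          rw [heq]
          by_cases he : Even i.1
          · rw [if_pos he]
            exact (h i.1 hik).1 he
          · rw [if_neg he]
            exact (h i.1 hik).2 he
    · rw [if_neg
        (show ¬ MarkovAux.res (Nat.find hex) ω (Fin.last (Nat.find hex)) ∈ Big from hb)]
      rcases hpat with h | h
      · -- pattern starting in Big but first hit in Small: keep times
        have ht0 : ω (t 0) ∈ Big := (h 0 (Nat.zero_le k)).1 Even.zero
        have hlt0 : Nat.find hex < t 0 := by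
          rcases Nat.lt_or_ge (Nat.find hex) (t 0) with hlt | hge
          · exact hlt
          · have heq0 : Nat.find hex = t 0 := by omega
            rw [heq0] at hb
            exact absurd ht0 hb
        refine ⟨fun i => t i.1 - Nat.find hex, ?_, ?_⟩
        · intro a c hac
          rw [Fin.lt_def] at hac
          have h1 : t a.1 < t c.1 :=
            hmono (Set.mem_Iic.mpr (by have := a.2; omega))
              (Set.mem_Iic.mpr (by have := c.2; omega)) hac
          have h2 : Nat.find hex ≤ t a.1 := by
            rcases Nat.eq_zero_or_pos a.1 with ha0 | hapos
            · rw [ha0]; exact hlt0.le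
            · exact (hlt0.trans
                (hmono h0k (Set.mem_Iic.mpr (by have := a.2; omega)) hapos)).le
          show t a.1 - Nat.find hex < t c.1 - Nat.find hex
          omega
        · intro i
          have hik : i.1 ≤ k := le_of_lt i.2
          have hge : Nat.find hex ≤ t i.1 := by
            rcases Nat.eq_zero_or_pos i.1 with hi0 | hipos
            · rw [hi0]; exact hlt0.le
            · exact (hlt0.trans (hmono h0k (Set.mem_Iic.mpr hik) hipos)).le
          show MarkovAux.shiftn (Nat.find hex) ω (t i.1 - Nat.find hex)
            ∈ (if Even i.1 then SB true else SB (!true))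
          have heq : MarkovAux.shiftn (Nat.find hex) ω (t i.1 - Nat.find hex)
              = ω (t i.1) := congrArg ω (by omega)
          rw [heq]
          by_cases he : Even i.1
          · rw [if_pos he]
            exact (h i.1 hik).1 he
          · rw [if_neg he]
            exact (h i.1 hik).2 he
      · -- pattern starting in Small and first hit in Small: shift times by one
        refine ⟨fun i => t (i.1 + 1) - Nat.find hex, ?_, ?_⟩
        · intro a c hac
          rw [Fin.lt_def] at hac
          have h1 : t (a.1 + 1) < t (c.1 + 1) :=
            hmono (Set.mem_Iic.mpr (by have := a.2; omega))
              (Set.mem_Iic.mpr (by have := c.2; omega)) (by omega)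
          have h2 : Nat.find hex ≤ t (a.1 + 1) :=
            hnle.trans (hmono h0k (Set.mem_Iic.mpr (by have := a.2; omega)) (by omega)).le
          show t (a.1 + 1) - Nat.find hex < t (c.1 + 1) - Nat.find hex
          omega
        · intro i
          have hik : i.1 + 1 ≤ k := i.2
          have hge : Nat.find hex ≤ t (i.1 + 1) :=
            hnle.trans (hmono h0k (Set.mem_Iic.mpr hik) (by omega)).le
          show MarkovAux.shiftn (Nat.find hex) ω (t (i.1 + 1) - Nat.find hex)
            ∈ (if Even i.1 then SB true else SB (!true))
          have heq : MarkovAux.shiftn (Nat.find hex) ω (t (i.1 + 1) - Nat.find hex)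
              = ω (t (i.1 + 1)) := congrArg ω (by omega)
          rw [heq]
          by_cases he : Even i.1
          · rw [if_pos he]
            exact (h (i.1 + 1) hik).2 (fun hc => (Nat.even_add_one.mp hc) he)
          · rw [if_neg he]
            exact (h (i.1 + 1) hik).1 (Nat.even_add_one.mpr he)
  have hkk : k - 1 + 1 = k := Nat.succ_pred_eq_of_pos hk
  have hEvB : ∀ (n : ℕ) (e : MarkovAux.FH (Big ∪ Small) n),
      M.μ ((e : Fin (n + 1) → V) (Fin.last n))
        (MarkovAux.Ev SB k
          (if (e : Fin (n + 1) → V) (Fin.last n) ∈ Big then false else true))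
        ≤ ENNReal.ofReal (r / (1 - r)) * ENNReal.ofReal (2 * r) ^ (k - 1) := by
    intro n e
    by_cases hb : (e : Fin (n + 1) → V) (Fin.last n) ∈ Big
    · rw [if_pos hb]
      have h := MarkovAux.Ev_bound M SB hr0 hr1 hcross (k - 1) false
        ((e : Fin (n + 1) → V) (Fin.last n)) hb
      rwa [hkk] at h
    · rw [if_neg hb]
      have hsm : (e : Fin (n + 1) → V) (Fin.last n) ∈ Small := (e.2.1).resolve_left hb
      have h := MarkovAux.Ev_bound M SB hr0 hr1 hcross (k - 1) true
        ((e : Fin (n + 1) → V) (Fin.last n)) hsm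
      rwa [hkk] at h
  have hle : M.μ z (alternatesEvent Big Small k)
      ≤ ENNReal.ofReal (r / (1 - r)) * ENNReal.ofReal (2 * r) ^ (k - 1) := by
    refine ((measure_mono hcover).trans (measure_iUnion_le _)).trans ?_
    have hbound : ∀ n : ℕ,
        M.μ z (⋃ (e : MarkovAux.FH (Big ∪ Small) n),
          (MarkovAux.res n ⁻¹' {(e : Fin (n + 1) → V)} ∩ MarkovAux.shiftn n ⁻¹'
            (MarkovAux.Ev SB k
              (if (e : Fin (n + 1) → V) (Fin.last n) ∈ Big then false else true))))
          ≤ (ENNReal.ofReal (r / (1 - r)) * ENNReal.ofReal (2 * r) ^ (k - 1))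
            * M.μ z (MarkovAux.res n ⁻¹' MarkovAux.FH (Big ∪ Small) n) := by
      intro n
      refine (measure_iUnion_le _).trans ?_
      have h1 : ∀ e : MarkovAux.FH (Big ∪ Small) n,
          M.μ z (MarkovAux.res n ⁻¹' {(e : Fin (n + 1) → V)} ∩ MarkovAux.shiftn n ⁻¹'
            (MarkovAux.Ev SB k
              (if (e : Fin (n + 1) → V) (Fin.last n) ∈ Big then false else true)))
            ≤ MarkovAux.wt M n z (e : Fin (n + 1) → V)
              * (ENNReal.ofReal (r / (1 - r)) * ENNReal.ofReal (2 * r) ^ (k - 1)) :=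
        fun e => (MarkovAux.measure_inter_shiftn_le M z n e _).trans
          (mul_le_mul_right (hEvB n e) _)
      refine (Summable.tsum_le_tsum h1 ENNReal.summable ENNReal.summable).trans (le_of_eq ?_)
      rw [ENNReal.tsum_mul_right, MarkovAux.measure_res_preimage, mul_comm]
    refine (Summable.tsum_le_tsum hbound ENNReal.summable ENNReal.summable).trans ?_
    rw [ENNReal.tsum_mul_left, ← MarkovAux.measure_hit]
    calc (ENNReal.ofReal (r / (1 - r)) * ENNReal.ofReal (2 * r) ^ (k - 1))
          * M.μ z (MarkovAux.Hit (Big ∪ Small))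
        ≤ (ENNReal.ofReal (r / (1 - r)) * ENNReal.ofReal (2 * r) ^ (k - 1)) * 1 :=
          mul_le_mul_right prob_le_one _
      _ = ENNReal.ofReal (r / (1 - r)) * ENNReal.ofReal (2 * r) ^ (k - 1) := mul_one _
  have hcd : ENNReal.ofReal (r / (1 - r)) < ENNReal.ofReal (2 * r) := by
    rw [ENNReal.ofReal_lt_ofReal_iff (by linarith), div_lt_iff₀ (by linarith)]
    nlinarith
  have hdpow0 : ENNReal.ofReal (2 * r) ^ (k - 1) ≠ 0 :=
    pow_ne_zero _ (by simp only [ne_eq, ENNReal.ofReal_eq_zero, not_le]; linarith)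
  have hdpowtop : ENNReal.ofReal (2 * r) ^ (k - 1) ≠ ⊤ :=
    ENNReal.pow_ne_top ENNReal.ofReal_ne_top
  have hlt : M.μ z (alternatesEvent Big Small k) < ENNReal.ofReal (2 * r) ^ k := by
    refine hle.trans_lt ?_
    calc ENNReal.ofReal (r / (1 - r)) * ENNReal.ofReal (2 * r) ^ (k - 1)
        < ENNReal.ofReal (2 * r) * ENNReal.ofReal (2 * r) ^ (k - 1) :=
          by
            rw [mul_comm _ (ENNReal.ofReal (2 * r) ^ (k - 1)), mul_comm (ENNReal.ofReal (2 * r))]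
            exact ENNReal.mul_lt_mul_right hdpow0 hdpowtop hcd
      _ = ENNReal.ofReal (2 * r) ^ k := by rw [← pow_succ', hkk]
  have hofk : (ENNReal.ofReal (2 * r)) ^ k = ENNReal.ofReal ((2 * r) ^ k) :=
    (ENNReal.ofReal_pow (by linarith) k).symm
  rw [hofk] at hlt
  have hfin := (ENNReal.toReal_lt_toReal (measure_ne_top _ _) ENNReal.ofReal_ne_top).mpr hlt
  rwa [ENNReal.toReal_ofReal (by positivity)] at hfin
end

section
/- Let G be a transient network with a fixed vertex o, let h(v) denote the probability that random walk started at v ever visits o, let l ∈ (0,1), and let B = {v ∈ V : h(v) = l}. Suppose random walk started at o visits B almost surely. Then almost surely the walk visits B only finitely often, and the distribution of the first vertex of B visited by random walk from o coincides with the distribution of the last vertex of B visited. -/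
open MeasureTheory Filter Set Topology
open scoped Classical

/-- A network: a connected, countable, locally finite graph with positive edge
conductances, given together with the family of path-space laws `μ z` of the
associated random walk (which moves from `x` to `y` with probability
`p x y = c x y / π x`), characterised on cylinder sets. -/
structure Network (V : Type*) [Countable V] [MeasurableSpace V] where
  adj : V → V → Prop
  adj_symm : ∀ x y, adj x y → adj y x
  adj_irrefl : ∀ x, ¬ adj x x
  locFin : ∀ x, {y | adj x y}.Finite
  conn : ∀ x y : V, ∃ (n : ℕ) (w : ℕ → V),
    w 0 = x ∧ w n = y ∧ ∀ i < n, adj (w i) (w (i + 1))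
  /-- conductances: positive on edges, zero on non-edges -/
  c : V → V → ℝ
  c_symm : ∀ x y, c x y = c y x
  c_pos : ∀ x y, adj x y → 0 < c x y
  c_off : ∀ x y, ¬ adj x y → c x y = 0
  /-- transition probabilities `p x y = c x y / π x` -/
  p : V → V → ℝ
  p_def : ∀ x y, p x y = c x y / ∑' y', c x y'
  /-- the law of random walk started at `z`, on the path space `ℕ → V` -/
  μ : V → Measure (ℕ → V)
  μ_prob : ∀ z, IsProbabilityMeasure (μ z)
  μ_cyl : ∀ (z : V) (n : ℕ) (w : ℕ → V),
    (μ z {ω : ℕ → V | ∀ i ≤ n, ω i = w i}).toReal =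
      if w 0 = z then ∏ i ∈ Finset.range n, p (w i) (w (i + 1)) else 0

namespace Network

variable {V : Type*} [Countable V] [MeasurableSpace V]

/-- `π x`, the sum of conductances of the edges at `x`. -/
noncomputable def piv (G : Network V) (x : V) : ℝ := ∑' y, G.c x y

/-- The Green function: the expected number of visits to `y` (including time 0)
by random walk started at `x`. -/
noncomputable def green (G : Network V) (x y : V) : ℝ :=
  (∑' n : ℕ, G.μ x {ω : ℕ → V | ω n = y}).toReal

/-- The network is transient if the expected number of returns is finite. -/
def Transient (G : Network V) : Prop :=
  ∀ x : V, (∑' n : ℕ, G.μ x {ω : ℕ → V | ω n = x}) ≠ ⊤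

/-- The probability that random walk started at `v` ever visits `o`. -/
noncomputable def hitProb (G : Network V) (v o : V) : ℝ :=
  (G.μ v {ω : ℕ → V | ∃ n, ω n = o}).toReal

/-- `h : V → ℝ` is harmonic on the network if `h x = ∑_y p x y * h y` for all `x`. -/
def IsHarmonic (G : Network V) (h : V → ℝ) : Prop :=
  ∀ x, HasSum (fun y => G.p x y * h y) (h x)

/-- A harmonic function `s : V → [0,1]` is sharp if, for every starting vertex,
its values along the random walk trajectory converge to `0` or `1` almost surely. -/
def IsSharp (G : Network V) (s : V → ℝ) : Prop :=
  G.IsHarmonic s ∧ (∀ x, s x ∈ Set.Icc (0 : ℝ) 1) ∧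
  ∀ z, ∀ᵐ ω ∂ G.μ z,
    Tendsto (fun n => s (ω n)) atTop (𝓝 0) ∨ Tendsto (fun n => s (ω n)) atTop (𝓝 1)

end Network

/-- The event that the first vertex of `B` visited by the walk is `b`. -/
def Network.firstVisitAt {V : Type*} (B : Set V) (b : V) : Set (ℕ → V) :=
  {ω | ∃ n, ω n = b ∧ ∀ m < n, ω m ∉ B}

/-- The event that the last vertex of `B` visited by the walk is `b`. -/
def Network.lastVisitAt {V : Type*} (B : Set V) (b : V) : Set (ℕ → V) :=
  {ω | ∃ n, ω n = b ∧ ∀ m, n < m → ω m ∉ B}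



/-! ### Auxiliary development -/

namespace Network

open ENNReal

variable {V : Type*} [Countable V] [MeasurableSpace V]

/-! #### Graph basics -/

lemma c_nonneg (G : Network V) (x y : V) : 0 ≤ G.c x y := by
  by_cases h : G.adj x y
  · exact (G.c_pos x y h).le
  · rw [G.c_off x y h]

lemma summable_c (G : Network V) (x : V) : Summable (G.c x) := by
  refine summable_of_ne_finset_zero (s := (G.locFin x).toFinset) ?_
  intro y hy
  exact G.c_off x y (by simpa using hy)

/-- Cylinder sets. -/
def Cyl (n : ℕ) (w : ℕ → V) : Set (ℕ → V) := {ω | ∀ i ≤ n, ω i = w i}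

/-- Path probability, in `ℝ≥0∞`. -/
noncomputable def pp (G : Network V) (z : V) (n : ℕ) (w : ℕ → V) : ℝ≥0∞ :=
  ENNReal.ofReal (if w 0 = z then ∏ i ∈ Finset.range n, G.p (w i) (w (i + 1)) else 0)

lemma measure_cyl (G : Network V) (z : V) (n : ℕ) (w : ℕ → V) :
    G.μ z (Cyl n w) = G.pp z n w := by
  haveI := G.μ_prob z
  have h := G.μ_cyl z n w
  rw [pp, ← h, ENNReal.ofReal_toReal (measure_ne_top _ _)]
  rfl

lemma exists_ne_vertex (G : Network V) (x : V) : ∃ y : V, y ≠ x := by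
  by_contra hno
  push_neg at hno
  haveI := G.μ_prob x
  have huniv : {ω : ℕ → V | ∀ i ≤ 1, ω i = (fun _ => x) i} = Set.univ := by
    ext ω
    simp only [Set.mem_setOf_eq, Set.mem_univ, iff_true]
    intro i _
    exact hno (ω i)
  have h := G.μ_cyl x 1 (fun _ => x)
  rw [huniv, measure_univ] at h
  simp only [ENNReal.toReal_one, if_pos rfl, Finset.prod_range_one] at h
  rw [G.p_def, G.c_off x x (G.adj_irrefl x), zero_div] at h
  exact one_ne_zero h

lemma exists_adj (G : Network V) (x : V) : ∃ y, G.adj x y := by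
  obtain ⟨y, hy⟩ := G.exists_ne_vertex x
  obtain ⟨n, w, h0, hn, hstep⟩ := G.conn x y
  rcases Nat.eq_zero_or_pos n with hn0 | hpos
  · exact absurd (by rw [← hn, hn0, h0]) hy
  · exact ⟨w 1, h0 ▸ hstep 0 hpos⟩

lemma sumc_pos (G : Network V) (x : V) : 0 < ∑' y, G.c x y := by
  obtain ⟨y, hy⟩ := G.exists_adj x
  have h1 : G.c x y ≤ ∑' y', G.c x y' :=
    Summable.le_tsum (G.summable_c x) y (fun _ _ => G.c_nonneg _ _)
  exact lt_of_lt_of_le (G.c_pos x y hy) h1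

lemma p_nonneg (G : Network V) (x y : V) : 0 ≤ G.p x y := by
  rw [G.p_def]
  exact div_nonneg (G.c_nonneg x y) (le_of_lt (G.sumc_pos x))

/-! #### The σ-algebra on `V` is discrete -/

lemma exists_separating (G : Network V) {z z' : V} (hzz : z ≠ z') :
    ∃ S : Set V, MeasurableSet S ∧ z ∈ S ∧ z' ∉ S := by
  by_contra hno
  push_neg at hno
  have hiff : ∀ S : Set V, MeasurableSet S → (z ∈ S ↔ z' ∈ S) := by
    intro S hS
    constructor
    · exact hno S hS
    · intro hz'
      by_contra hz
      exact (hno Sᶜ hS.compl hz) hz'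
  set e : V ≃ V := Equiv.swap z z' with he
  have hswap : ∀ S : Set V, MeasurableSet S → (⇑e) ⁻¹' S = S := by
    intro S hS
    ext u
    simp only [Set.mem_preimage]
    rcases eq_or_ne u z with rfl | huz
    · rw [he, Equiv.swap_apply_left]
      exact (hiff S hS).symm
    · rcases eq_or_ne u z' with rfl | huz'
      · rw [he, Equiv.swap_apply_right]
        exact hiff S hS
      · rw [he, Equiv.swap_apply_of_ne_of_ne huz huz']
  set T : (ℕ → V) → (ℕ → V) := fun ω k => e (ω k) with hTdef
  have hTinv : ∀ M : Set (ℕ → V), MeasurableSet M → T ⁻¹' M = M := by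
    intro M hM
    have hM' := MeasurableSpace.measurableSet_iSup.mp
      (show MeasurableSet[⨆ i : ℕ,
        MeasurableSpace.comap (fun ω : ℕ → V => ω i) inferInstance] M from hM)
    clear hM
    induction hM' with
    | basic u hu =>
      obtain ⟨i, hu⟩ := hu
      obtain ⟨S, hS, rfl⟩ := MeasurableSpace.measurableSet_comap.mp hu
      ext ω
      simp only [Set.mem_preimage]
      exact Set.ext_iff.mp (hswap S hS) (ω i)
    | empty => simp
    | compl u _ ih => rw [Set.preimage_compl, ih]
    | iUnion f _ ih =>
      rw [Set.preimage_iUnion]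
      exact Set.iUnion_congr ih
  haveI := G.μ_prob z
  have hcyl0 : ∀ v : V, {ω : ℕ → V | ω 0 = v} = Cyl 0 (fun _ => v) := by
    intro v
    ext ω
    simp [Cyl, Nat.le_zero]
  have h0 : G.μ z {ω | ω 0 = z'} = 0 := by
    rw [hcyl0 z', G.measure_cyl, pp, if_neg (by simpa using hzz.symm), ENNReal.ofReal_zero]
  have h1 : G.μ z {ω | ω 0 = z} = 1 := by
    rw [hcyl0 z, G.measure_cyl, pp, if_pos rfl, Finset.range_zero, Finset.prod_empty,
      ENNReal.ofReal_one]
  obtain ⟨M, hsub, hMm, hMμ⟩ := exists_measurable_superset (G.μ z) {ω | ω 0 = z'}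
  have hsub' : {ω : ℕ → V | ω 0 = z} ⊆ M := by
    intro ω hω
    have hωz : ω 0 = z := hω
    have hTω : T ω ∈ M := by
      apply hsub
      show T ω 0 = z'
      rw [hTdef]
      show e (ω 0) = z'
      rw [hωz, he]
      exact Equiv.swap_apply_left z z'
    rw [← hTinv M hMm]
    exact hTω
  have hcontra : (1 : ℝ≥0∞) ≤ 0 := by
    calc (1 : ℝ≥0∞) = G.μ z {ω | ω 0 = z} := h1.symm
    _ ≤ G.μ z M := measure_mono hsub'
    _ = G.μ z {ω | ω 0 = z'} := hMμ
    _ = 0 := h0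
  simp at hcontra

lemma measurableSet_vertex_singleton (G : Network V) (v : V) :
    MeasurableSet ({v} : Set V) := by
  choose S hS hv hnot using fun u : {u : V // u ≠ v} => G.exists_separating (Ne.symm u.2)
  have hset : ({v} : Set V) = ⋂ u : {u : V // u ≠ v}, S u := by
    ext w
    simp only [Set.mem_singleton_iff, Set.mem_iInter]
    constructor
    · rintro rfl u
      exact hv u
    · intro hw
      by_contra hwv
      exact hnot ⟨w, hwv⟩ (hw ⟨w, hwv⟩)
  rw [hset]
  exact MeasurableSet.iInter fun u => hS u

lemma measurableSet_vertex (G : Network V) (S : Set V) : MeasurableSet S := by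
  have hset : S = ⋃ v ∈ S, {v} := by simp
  rw [hset]
  exact MeasurableSet.biUnion (Set.to_countable S)
    (fun v _ => G.measurableSet_vertex_singleton v)

lemma measurableSet_coord (G : Network V) (n : ℕ) (S : Set V) :
    MeasurableSet {ω : ℕ → V | ω n ∈ S} :=
  measurable_pi_apply n (G.measurableSet_vertex S)

lemma measurableSet_cyl (G : Network V) (n : ℕ) (w : ℕ → V) : MeasurableSet (Cyl n w) := by
  have hset : Cyl n w = ⋂ i, ⋂ (_ : i ≤ n), {ω : ℕ → V | ω i ∈ ({w i} : Set V)} := by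
    ext ω
    simp [Cyl]
  rw [hset]
  exact MeasurableSet.iInter fun i => MeasurableSet.iInter fun _ => G.measurableSet_coord i _

end Network


namespace Network

open ENNReal

variable {V : Type*} [Countable V] [MeasurableSpace V]

/-! #### Truncated paths and determined events -/

/-- Truncation of a path after time `n`. -/
def trunc (n : ℕ) (ω : ℕ → V) : ℕ → V := fun k => ω (min k n)

/-- Paths constant after time `n`. -/
def Wset (n : ℕ) : Set (ℕ → V) := {w | trunc n w = w}

lemma trunc_eq_of_le {n k : ℕ} (h : k ≤ n) (ω : ℕ → V) : trunc n ω k = ω k := by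
  simp [trunc, min_eq_left h]

lemma trunc_mem (n : ℕ) (ω : ℕ → V) : trunc n ω ∈ Wset n := by
  show trunc n (trunc n ω) = trunc n ω
  funext k
  show ω (min (min k n) n) = ω (min k n)
  rw [min_eq_left (min_le_right k n)]

lemma countable_WsetInter (n : ℕ) (A : Set (ℕ → V)) : (Wset n ∩ A).Countable := by
  have hinj : Function.Injective
      (fun w : ↥(Wset (V := V) n) => (fun i : Fin (n+1) => (w : ℕ → V) i.1)) := by
    intro w w' hww
    apply Subtype.ext
    funext k
    have h1 : (w : ℕ → V) (min k n) = (w : ℕ → V) k := congrFun w.2 k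
    have h2 : (w' : ℕ → V) (min k n) = (w' : ℕ → V) k := congrFun w'.2 k
    rw [← h1, ← h2]
    exact congrFun hww ⟨min k n, by omega⟩
  haveI : Countable ↥(Wset (V := V) n) := hinj.countable
  have hcnt : (Wset (V := V) n).Countable := Set.countable_coe_iff.mp inferInstance
  exact hcnt.mono Set.inter_subset_left

/-- An event determined by coordinates `≤ n`. -/
def Det (n : ℕ) (A : Set (ℕ → V)) : Prop :=
  ∀ ω ω' : ℕ → V, (∀ i ≤ n, ω i = ω' i) → ω ∈ A → ω' ∈ A

lemma decomp {n : ℕ} {A : Set (ℕ → V)} (hA : Det n A) :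
    A = ⋃ w : ↥(Wset n ∩ A), Cyl n (w : ℕ → V) := by
  ext ω
  simp only [Set.mem_iUnion]
  constructor
  · intro hω
    exact ⟨⟨trunc n ω, trunc_mem n ω,
      hA ω (trunc n ω) (fun i hi => (trunc_eq_of_le hi ω).symm) hω⟩,
      fun i hi => (trunc_eq_of_le hi ω).symm⟩
  · rintro ⟨⟨w, hwW, hwA⟩, hω⟩
    exact hA w ω (fun i hi => (hω i hi).symm) hwA

lemma cyl_disjoint {n : ℕ} {w w' : ℕ → V} (hw : w ∈ Wset n) (hw' : w' ∈ Wset n)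
    (hne : w ≠ w') : Disjoint (Cyl n w) (Cyl n w') := by
  rw [Set.disjoint_left]
  intro ω hω hω'
  apply hne
  funext k
  have h1 : w (min k n) = w k := congrFun hw k
  have h2 : w' (min k n) = w' k := congrFun hw' k
  rw [← h1, ← h2, ← hω (min k n) (min_le_right k n)]
  exact hω' (min k n) (min_le_right k n)

lemma det_measurableSet (G : Network V) {n : ℕ} {A : Set (ℕ → V)} (hA : Det n A) :
    MeasurableSet A := by
  haveI := (countable_WsetInter n A).to_subtype
  rw [decomp hA]
  exact MeasurableSet.iUnion fun w => G.measurableSet_cyl n w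

lemma measure_det (G : Network V) (z : V) {n : ℕ} {A : Set (ℕ → V)} (hA : Det n A) :
    G.μ z A = ∑' w : ↥(Wset n ∩ A), G.pp z n (w : ℕ → V) := by
  haveI := (countable_WsetInter n A).to_subtype
  conv_lhs => rw [decomp hA]
  rw [measure_iUnion ?_ (fun w => G.measurableSet_cyl n _)]
  · exact tsum_congr fun w => G.measure_cyl z n w
  · intro w w' hne
    exact cyl_disjoint w.2.1 w'.2.1 (fun h => hne (Subtype.ext h))

/-! #### The Markov property -/

/-- The shift on path space. -/
def shft (n : ℕ) (ω : ℕ → V) : ℕ → V := fun m => ω (m + n)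

lemma measurable_shft (n : ℕ) : Measurable (shft (V := V) n) :=
  measurable_pi_lambda _ fun m => measurable_pi_apply (m + n)

lemma isPiSystem_cylSys : IsPiSystem {S : Set (ℕ → V) | ∃ n w, S = Cyl n w} := by
  rintro S ⟨n, w, rfl⟩ T ⟨m, u, rfl⟩ hne
  obtain ⟨ω, hω1, hω2⟩ := hne
  refine ⟨max n m, ω, ?_⟩
  ext ω'
  constructor
  · rintro ⟨h1, h2⟩
    intro i hi
    rcases le_or_gt i n with h | h
    · exact (h1 i h).trans (hω1 i h).symm
    · have him : i ≤ m := (le_max_iff.mp hi).resolve_left (by omega)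
      exact (h2 i him).trans (hω2 i him).symm
  · intro hmem
    constructor
    · intro i hi
      exact (hmem i (le_trans hi (le_max_left n m))).trans (hω1 i hi)
    · intro i hi
      exact (hmem i (le_trans hi (le_max_right n m))).trans (hω2 i hi)

lemma det_genFrom {n : ℕ} {A : Set (ℕ → V)} (hA : Det n A) :
    MeasurableSet[MeasurableSpace.generateFrom {S : Set (ℕ → V) | ∃ m u, S = Cyl m u}] A := by
  haveI := (countable_WsetInter n A).to_subtype
  rw [decomp hA]
  exact MeasurableSet.iUnion fun w =>
    MeasurableSpace.measurableSet_generateFrom ⟨n, (w : ℕ → V), rfl⟩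

lemma generateFrom_cylSys (G : Network V) :
    MeasurableSpace.generateFrom {S : Set (ℕ → V) | ∃ n w, S = Cyl n w}
      = (inferInstance : MeasurableSpace (ℕ → V)) := by
  apply le_antisymm
  · exact MeasurableSpace.generateFrom_le
      (by rintro S ⟨n, w, rfl⟩; exact G.measurableSet_cyl n w)
  · rw [show (inferInstance : MeasurableSpace (ℕ → V)) = MeasurableSpace.pi from rfl,
      ← MeasureTheory.generateFrom_measurableCylinders]
    refine MeasurableSpace.generateFrom_le ?_
    intro t ht
    rw [MeasureTheory.mem_measurableCylinders] at ht
    obtain ⟨s, S, hS, rfl⟩ := ht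
    refine det_genFrom (n := if h : s.Nonempty then s.max' h else 0) ?_
    intro ω ω' hag hω
    have hres : (fun i : s => ω (i : ℕ)) = (fun i : s => ω' (i : ℕ)) := by
      funext i
      rcases i with ⟨i, hi⟩
      refine hag i ?_
      have hne : s.Nonempty := ⟨i, hi⟩
      rw [dif_pos hne]
      exact s.le_max' i hi
    show (fun i : s => ω' (i : ℕ)) ∈ S
    rw [← hres]
    exact hω

lemma markov (G : Network V) (z : V) (n : ℕ) (w : ℕ → V) {F : Set (ℕ → V)}
    (hF : MeasurableSet F) :
    G.μ z (Cyl n w ∩ shft n ⁻¹' F) = G.pp z n w * G.μ (w n) F := by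
  haveI := G.μ_prob z
  haveI := G.μ_prob (w n)
  by_cases h0 : w 0 = z
  case neg =>
    have hc : G.μ z (Cyl n w) = 0 := by
      rw [G.measure_cyl, pp, if_neg h0, ENNReal.ofReal_zero]
    have h1 : G.μ z (Cyl n w ∩ shft n ⁻¹' F) = 0 :=
      measure_mono_null Set.inter_subset_left hc
    rw [h1, pp, if_neg h0, ENNReal.ofReal_zero, zero_mul]
  case pos =>
  have key : Measure.map (shft n) ((G.μ z).restrict (Cyl n w)) = G.pp z n w • G.μ (w n) := by
    haveI : IsFiniteMeasure (Measure.map (shft n) ((G.μ z).restrict (Cyl n w))) := by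
      constructor
      rw [Measure.map_apply (measurable_shft n) MeasurableSet.univ, Set.preimage_univ,
        Measure.restrict_apply MeasurableSet.univ, Set.univ_inter]
      exact measure_lt_top _ _
    refine ext_of_generate_finite _ (G.generateFrom_cylSys).symm isPiSystem_cylSys ?_ ?_
    · rintro S ⟨m, u, rfl⟩
      rw [Measure.map_apply (measurable_shft n) (G.measurableSet_cyl m u),
        Measure.restrict_apply ((measurable_shft n) (G.measurableSet_cyl m u)),
        Measure.smul_apply, smul_eq_mul, G.measure_cyl]
      by_cases hu0 : u 0 = w n
      case neg =>
        have hempty : shft n ⁻¹' Cyl m u ∩ Cyl n w = ∅ := by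
          ext ω
          simp only [Set.mem_inter_iff, Set.mem_preimage, Set.mem_empty_iff_false, iff_false]
          rintro ⟨h1, h2⟩
          apply hu0
          have hω0 : ω (0 + n) = u 0 := h1 0 (Nat.zero_le m)
          have hωn : ω n = w n := h2 n le_rfl
          rw [← hω0, ← hωn]
          norm_num
        have hzero : G.pp (w n) m u = 0 := by
          rw [pp, if_neg hu0, ENNReal.ofReal_zero]
        rw [hempty, measure_empty, hzero, mul_zero]
      case pos =>
        set wu : ℕ → V := fun k => if k < n then w k else u (k - n) with hwu
        have hset : shft n ⁻¹' Cyl m u ∩ Cyl n w = Cyl (n + m) wu := by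
          ext ω
          simp only [Set.mem_inter_iff, Set.mem_preimage]
          constructor
          · rintro ⟨h1, h2⟩
            intro k hk
            rcases lt_or_ge k n with hkn | hkn
            · rw [h2 k hkn.le, hwu]
              simp [hkn]
            · have hkm : k - n ≤ m := by omega
              have : ω ((k - n) + n) = u (k - n) := h1 (k - n) hkm
              rw [show (k - n) + n = k by omega] at this
              rw [this, hwu]
              simp [not_lt.mpr hkn]
          · intro hmem
            constructor
            · intro i hi
              have h := hmem (i + n) (by omega)
              rw [hwu] at h
              simpa [Nat.add_sub_cancel, shft] using h
            · intro i hi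
              have h := hmem i (by omega)
              rw [hwu] at h
              rcases lt_or_eq_of_le hi with hin | rfl
              · simpa [hin] using h
              · simpa [lt_irrefl, hu0] using h
        have hpp : G.pp z (n + m) wu = G.pp z n w * G.pp (w n) m u := by
          have hwu0 : wu 0 = w 0 := by
            rcases Nat.eq_zero_or_pos n with rfl | hn
            · simpa [hwu] using hu0
            · simp [hwu, hn]
          rw [pp, pp, pp, if_pos (by rw [hwu0]; exact h0), if_pos h0, if_pos hu0]
          rw [Finset.prod_range_add]
          have hprod1 : ∀ i ∈ Finset.range n,
              G.p (wu i) (wu (i + 1)) = G.p (w i) (w (i + 1)) := by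
            intro i hi
            have hin : i < n := Finset.mem_range.mp hi
            have e1 : wu i = w i := by simp [hwu, hin]
            have e2 : wu (i + 1) = w (i + 1) := by
              rcases lt_or_eq_of_le (Nat.succ_le_of_lt hin) with hi1 | hi1
              · simp [hwu, hi1]
              · rw [hwu]
                simp only [show ¬ (i + 1 < n) by omega, if_false]
                rw [show i + 1 - n = 0 by omega, hu0]
                exact congrArg w hi1.symm
            rw [e1, e2]
          have hprod2 : ∀ i ∈ Finset.range m,
              G.p (wu (n + i)) (wu (n + i + 1)) = G.p (u i) (u (i + 1)) := by
            intro i _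
            have e1 : wu (n + i) = u i := by
              rcases Nat.eq_zero_or_pos i with rfl | hipos
              · rcases Nat.eq_zero_or_pos n with rfl | hn
                · simp [hwu]
                · simp [hwu, hu0]
              · rw [hwu]
                simp only [show ¬ (n + i < n) by omega, if_false]
                rw [show n + i - n = i by omega]
            have e2 : wu (n + i + 1) = u (i + 1) := by
              rw [hwu]
              simp only [show ¬ (n + i + 1 < n) by omega, if_false]
              rw [show n + i + 1 - n = i + 1 by omega]
            rw [e1, e2]
          rw [Finset.prod_congr rfl hprod1, Finset.prod_congr rfl hprod2]
          exact ENNReal.ofReal_mul (Finset.prod_nonneg fun i _ => G.p_nonneg _ _)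
        rw [hset, G.measure_cyl, hpp]
    · rw [Measure.map_apply (measurable_shft n) MeasurableSet.univ, Set.preimage_univ,
        Measure.restrict_apply MeasurableSet.univ, Set.univ_inter, G.measure_cyl,
        Measure.smul_apply, smul_eq_mul, measure_univ, mul_one]
  calc G.μ z (Cyl n w ∩ shft n ⁻¹' F) = G.μ z (shft n ⁻¹' F ∩ Cyl n w) := by
        rw [Set.inter_comm]
  _ = ((G.μ z).restrict (Cyl n w)) (shft n ⁻¹' F) :=
        (Measure.restrict_apply ((measurable_shft n) hF)).symm
  _ = Measure.map (shft n) ((G.μ z).restrict (Cyl n w)) F :=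
        (Measure.map_apply (measurable_shft n) hF).symm
  _ = (G.pp z n w • G.μ (w n)) F := by rw [key]
  _ = G.pp z n w * G.μ (w n) F := by rw [Measure.smul_apply, smul_eq_mul]

lemma markov_det (G : Network V) (z : V) {n : ℕ} {A : Set (ℕ → V)} (hA : Det n A)
    {F : Set (ℕ → V)} (hF : MeasurableSet F) :
    G.μ z (A ∩ shft n ⁻¹' F)
      = ∑' w : ↥(Wset n ∩ A), G.pp z n (w : ℕ → V) * G.μ ((w : ℕ → V) n) F := by
  haveI := (countable_WsetInter n A).to_subtype
  conv_lhs => rw [decomp hA, Set.iUnion_inter]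
  rw [measure_iUnion ?_ (fun w => (G.measurableSet_cyl n _).inter ((measurable_shft n) hF))]
  · exact tsum_congr fun w => G.markov z n w hF
  · intro w w' hne
    exact Disjoint.mono Set.inter_subset_left Set.inter_subset_left
      (cyl_disjoint w.2.1 w'.2.1 (fun h => hne (Subtype.ext h)))

end Network


namespace Network

open ENNReal

variable {V : Type*} [Countable V] [MeasurableSpace V]

/-! #### A Cauchy-product identity for `ℝ≥0∞` sums -/

lemma cauchy_prod (f : ℕ → ℕ → ℝ≥0∞) :
    ∑' n, ∑ j ∈ Finset.range (n + 1), f j (n - j) = ∑' j, ∑' m, f j m := by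
  have h1 : ∀ n, ∑ j ∈ Finset.range (n + 1), f j (n - j)
      = ∑' j, (if j ≤ n then f j (n - j) else 0) := by
    intro n
    rw [tsum_eq_sum (s := Finset.range (n + 1))
      (fun j hj => if_neg (by simpa [Nat.lt_succ_iff] using hj))]
    exact Finset.sum_congr rfl fun j hj =>
      (if_pos (by simpa [Nat.lt_succ_iff] using hj)).symm
  calc ∑' n, ∑ j ∈ Finset.range (n + 1), f j (n - j)
      = ∑' n, ∑' j, (if j ≤ n then f j (n - j) else 0) := tsum_congr h1
    _ = ∑' j, ∑' n, (if j ≤ n then f j (n - j) else 0) := ENNReal.tsum_comm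
    _ = ∑' j, ∑' m, f j m := by
        refine tsum_congr fun j => ?_
        refine tsum_eq_tsum_of_ne_zero_bij (fun m => (m : ℕ) + j) ?_ ?_ ?_
        · intro x y hxy
          have hxy' : (x : ℕ) + j = (y : ℕ) + j := hxy
          exact Subtype.ext (by omega)
        · intro nn hnn
          simp only [Function.mem_support, ne_eq, ite_eq_right_iff, not_forall] at hnn
          obtain ⟨hjn, hne⟩ := hnn
          refine ⟨⟨nn - j, by simpa [Function.mem_support] using hne⟩, by simp; omega⟩
        · intro x
          simp [Nat.add_sub_cancel]

/-! #### Time reversal -/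

/-- Time reversal of a path truncated at time `n`. -/
def rv (n : ℕ) (w : ℕ → V) : ℕ → V := fun k => w (n - min k n)

lemma rv_apply {n k : ℕ} (h : k ≤ n) (w : ℕ → V) : rv n w k = w (n - k) := by
  simp [rv, min_eq_left h]

lemma rv_mem_Wset (n : ℕ) (w : ℕ → V) : rv n w ∈ Wset n := by
  show trunc n (rv n w) = rv n w
  funext k
  show w (n - min (min k n) n) = w (n - min k n)
  rw [min_eq_left (min_le_right k n)]

lemma rv_invol {n : ℕ} {w : ℕ → V} (hw : w ∈ Wset n) : rv n (rv n w) = w := by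
  funext k
  show w (n - min (n - min k n) n) = w k
  rw [min_eq_left (by omega : n - min k n ≤ n), show n - (n - min k n) = min k n by omega]
  exact congrFun hw k

lemma rev_prod (G : Network V) (n : ℕ) (w : ℕ → V) :
    (∑' y, G.c (w 0) y) * ∏ i ∈ Finset.range n, G.p (w i) (w (i + 1))
      = (∑' y, G.c (w n) y) * ∏ i ∈ Finset.range n, G.p (w (n - i)) (w (n - i - 1)) := by
  have hπ : ∀ x : V, (0:ℝ) < ∑' y, G.c x y := G.sumc_pos
  have h1 : ∏ i ∈ Finset.range n, G.p (w i) (w (i + 1))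
      = (∏ i ∈ Finset.range n, G.c (w i) (w (i + 1)))
        / ∏ i ∈ Finset.range n, (∑' y, G.c (w i) y) := by
    rw [← Finset.prod_div_distrib]
    exact Finset.prod_congr rfl fun i _ => G.p_def _ _
  have h2 : ∏ i ∈ Finset.range n, G.p (w (n - i)) (w (n - i - 1))
      = (∏ i ∈ Finset.range n, G.c (w (n - i)) (w (n - i - 1)))
        / ∏ i ∈ Finset.range n, (∑' y, G.c (w (n - i)) y) := by
    rw [← Finset.prod_div_distrib]
    exact Finset.prod_congr rfl fun i _ => G.p_def _ _
  have hc : ∏ i ∈ Finset.range n, G.c (w (n - i)) (w (n - i - 1))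
      = ∏ i ∈ Finset.range n, G.c (w i) (w (i + 1)) := by
    have e1 : ∏ i ∈ Finset.range n, G.c (w i) (w (i + 1))
        = ∏ i ∈ Finset.range n, G.c (w (i + 1)) (w i) :=
      Finset.prod_congr rfl fun i _ => G.c_symm _ _
    rw [e1, ← Finset.prod_range_reflect (fun j => G.c (w (j + 1)) (w j)) n]
    refine Finset.prod_congr rfl fun i hi => ?_
    have hin : i < n := Finset.mem_range.mp hi
    rw [show n - 1 - i + 1 = n - i by omega, show n - 1 - i = n - i - 1 by omega]
  have hd : ∏ i ∈ Finset.range n, (∑' y, G.c (w (n - i)) y)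
      = ∏ i ∈ Finset.range n, (∑' y, G.c (w (i + 1)) y) := by
    rw [← Finset.prod_range_reflect (fun j => ∑' y, G.c (w (j + 1)) y) n]
    refine Finset.prod_congr rfl fun i hi => ?_
    have hin : i < n := Finset.mem_range.mp hi
    rw [show n - 1 - i + 1 = n - i by omega]
  rw [h1, h2, hc, hd]
  have hkey : (∑' y, G.c (w 0) y) * ∏ i ∈ Finset.range n, (∑' y, G.c (w (i + 1)) y)
      = (∑' y, G.c (w n) y) * ∏ i ∈ Finset.range n, (∑' y, G.c (w i) y) := by
    rw [mul_comm ((∑' y, G.c (w 0) y)) _, mul_comm ((∑' y, G.c (w n) y)) _]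
    rw [← Finset.prod_range_succ' (fun i => ∑' y, G.c (w i) y) n,
      ← Finset.prod_range_succ (fun i => ∑' y, G.c (w i) y) n]
  have hne1 : (∏ i ∈ Finset.range n, (∑' y, G.c (w i) y)) ≠ 0 :=
    (Finset.prod_pos (fun i _ => hπ (w i))).ne'
  have hne2 : (∏ i ∈ Finset.range n, (∑' y, G.c (w (i + 1)) y)) ≠ 0 :=
    (Finset.prod_pos (fun i _ => hπ (w (i + 1)))).ne'
  field_simp
  linear_combination (∏ i ∈ Finset.range n, G.c (w i) (w (i + 1))) * hkey

/-- `π x` as an extended real. -/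
noncomputable def piE (G : Network V) (x : V) : ℝ≥0∞ := ENNReal.ofReal (∑' y, G.c x y)

lemma piE_ne_zero (G : Network V) (x : V) : G.piE x ≠ 0 := by
  rw [piE]
  exact (ENNReal.ofReal_pos.mpr (G.sumc_pos x)).ne'

lemma piE_ne_top (G : Network V) (x : V) : G.piE x ≠ ⊤ := ENNReal.ofReal_ne_top

lemma rev_pp (G : Network V) {n : ℕ} {w : ℕ → V} {z y : V}
    (hw0 : w 0 = z) (hwn : w n = y) :
    G.piE z * G.pp z n w = G.piE y * G.pp y n (rv n w) := by
  have h0' : rv n w 0 = y := by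
    rw [rv_apply (Nat.zero_le n), Nat.sub_zero, hwn]
  rw [pp, pp, if_pos hw0, if_pos h0', piE, piE]
  rw [← ENNReal.ofReal_mul (tsum_nonneg fun y' => G.c_nonneg _ _),
    ← ENNReal.ofReal_mul (tsum_nonneg fun y' => G.c_nonneg _ _)]
  congr 1
  have hprod : ∏ i ∈ Finset.range n, G.p (rv n w i) (rv n w (i + 1))
      = ∏ i ∈ Finset.range n, G.p (w (n - i)) (w (n - i - 1)) := by
    refine Finset.prod_congr rfl fun i hi => ?_
    have hin : i < n := Finset.mem_range.mp hi
    rw [rv_apply hin.le, rv_apply (by omega : i + 1 ≤ n),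
      show n - (i + 1) = n - i - 1 by omega]
  rw [hprod, ← hw0, ← hwn]
  exact G.rev_prod n w

lemma rev_measure (G : Network V) {n : ℕ} {A A' : Set (ℕ → V)} {z y : V}
    (hA : Det n A) (hA' : Det n A')
    (h1 : ∀ w, w ∈ Wset n ∩ A → (w 0 = z ∧ w n = y ∧ rv n w ∈ A'))
    (h2 : ∀ w, w ∈ Wset n ∩ A' → (w 0 = y ∧ w n = z ∧ rv n w ∈ A)) :
    G.piE z * G.μ z A = G.piE y * G.μ y A' := by
  rw [G.measure_det z hA, G.measure_det y hA', ← ENNReal.tsum_mul_left,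
    ← ENNReal.tsum_mul_left]
  have hmap : ∀ w : ↥(Wset n ∩ A), rv n (w : ℕ → V) ∈ Wset n ∩ A' :=
    fun w => ⟨rv_mem_Wset n _, (h1 w w.2).2.2⟩
  have hmap' : ∀ w : ↥(Wset n ∩ A'), rv n (w : ℕ → V) ∈ Wset n ∩ A :=
    fun w => ⟨rv_mem_Wset n _, (h2 w w.2).2.2⟩
  let e : ↥(Wset n ∩ A) ≃ ↥(Wset n ∩ A') :=
    { toFun := fun w => ⟨rv n w, hmap w⟩
      invFun := fun w => ⟨rv n w, hmap' w⟩
      left_inv := fun w => Subtype.ext (rv_invol w.2.1)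
      right_inv := fun w => Subtype.ext (rv_invol w.2.1) }
  rw [← Equiv.tsum_eq e (fun w : ↥(Wset n ∩ A') => G.piE y * G.pp y n (w : ℕ → V))]
  refine tsum_congr fun w => ?_
  have hw := h1 w w.2
  exact G.rev_pp hw.1 hw.2.1

/-! #### Walks start at their starting point a.s. -/

lemma measure_inter_start (G : Network V) (z : V) (A : Set (ℕ → V)) :
    G.μ z A = G.μ z (A ∩ {ω | ω 0 = z}) := by
  haveI := G.μ_prob z
  have hm : MeasurableSet {ω : ℕ → V | ω 0 = z} := by
    have : {ω : ℕ → V | ω 0 = z} = {ω : ℕ → V | ω 0 ∈ ({z} : Set V)} := rfl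
    rw [this]
    exact G.measurableSet_coord 0 {z}
  have h1 : G.μ z {ω : ℕ → V | ω 0 = z} = 1 := by
    have hset : {ω : ℕ → V | ω 0 = z} = Cyl 0 (fun _ => z) := by
      ext ω
      simp [Cyl, Nat.le_zero]
    rw [hset, G.measure_cyl, pp, if_pos rfl, Finset.range_zero, Finset.prod_empty,
      ENNReal.ofReal_one]
  have h0 : G.μ z ({ω : ℕ → V | ω 0 = z}ᶜ) = 0 := by
    rw [measure_compl hm (measure_ne_top _ _), h1, measure_univ, tsub_self]
  have hdiff : G.μ z (A \ {ω | ω 0 = z}) = 0 :=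
    measure_mono_null (fun ω hω => hω.2) h0
  rw [← measure_inter_add_diff A hm, hdiff, add_zero]

end Network


namespace Network

open ENNReal

variable {V : Type*} [Countable V] [MeasurableSpace V]

/-! #### Events for the random walk -/

/-- The walk is at `y` at time `n`. -/
def coordEv (n : ℕ) (y : V) : Set (ℕ → V) := {ω | ω n = y}

/-- The walk hits `o` at some time. -/
def HitSet (o : V) : Set (ℕ → V) := {ω | ∃ n, ω n = o}

/-- First hit of `o` at time `j`. -/
def FH (o : V) (j : ℕ) : Set (ℕ → V) := {ω | ω j = o ∧ ∀ i < j, ω i ≠ o}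

/-- First return to `B` (after time `0`) at time `j`. -/
def RET (B : Set V) (j : ℕ) : Set (ℕ → V) :=
  {ω | 1 ≤ j ∧ ω j ∈ B ∧ ∀ i, 1 ≤ i → i < j → ω i ∉ B}

/-- No return to `B` after time `0`. -/
def NRet (B : Set V) : Set (ℕ → V) := {ω | ∀ m, 1 ≤ m → ω m ∉ B}

/-- Some return to `B` after time `0`. -/
def RetAll (B : Set V) : Set (ℕ → V) := {ω | ∃ m, 1 ≤ m ∧ ω m ∈ B}

/-- At `b` at time `n`, avoiding `B` strictly before `n`. -/
def FP (B : Set V) (b : V) (n : ℕ) : Set (ℕ → V) := {ω | ω n = b ∧ ∀ m < n, ω m ∉ B}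

/-- At `o` at time `n`, avoiding `B` during `[1, n]`. -/
def VE (B : Set V) (o : V) (n : ℕ) : Set (ℕ → V) :=
  {ω | ω n = o ∧ ∀ m, 1 ≤ m → m ≤ n → ω m ∉ B}

/-- At time `n`, the walk makes its `k`-th visit to `B`. -/
def KV (B : Set V) (k n : ℕ) : Set (ℕ → V) :=
  {ω | ω n ∈ B ∧ ((Finset.range (n + 1)).filter (fun i => ω i ∈ B)).card = k}

lemma detCoord (n : ℕ) (y : V) : Det n (coordEv n y) := by
  intro ω ω' hag hω
  show ω' n = y
  rw [← hag n le_rfl]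
  exact hω

lemma detFH (o : V) (j : ℕ) : Det j (FH o j) := by
  intro ω ω' hag hω
  refine ⟨by rw [← hag j le_rfl]; exact hω.1, fun i hi => ?_⟩
  rw [← hag i hi.le]
  exact hω.2 i hi

lemma detRET (B : Set V) (j : ℕ) : Det j (RET B j) := by
  intro ω ω' hag hω
  refine ⟨hω.1, by rw [← hag j le_rfl]; exact hω.2.1, fun i h1 h2 => ?_⟩
  rw [← hag i h2.le]
  exact hω.2.2 i h1 h2

lemma detFP (B : Set V) (b : V) (n : ℕ) : Det n (FP B b n) := by
  intro ω ω' hag hω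
  refine ⟨by rw [← hag n le_rfl]; exact hω.1, fun m hm => ?_⟩
  rw [← hag m hm.le]
  exact hω.2 m hm

lemma detVE (B : Set V) (o : V) (n : ℕ) : Det n (VE B o n) := by
  intro ω ω' hag hω
  refine ⟨by rw [← hag n le_rfl]; exact hω.1, fun m h1 h2 => ?_⟩
  rw [← hag m h2]
  exact hω.2 m h1 h2

lemma detKV (B : Set V) (k n : ℕ) : Det n (KV B k n) := by
  intro ω ω' hag hω
  obtain ⟨h1, h2⟩ := hω
  refine ⟨by rw [← hag n le_rfl]; exact h1, ?_⟩
  rw [← h2]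
  have hfeq : (Finset.range (n + 1)).filter (fun i => ω' i ∈ B)
      = (Finset.range (n + 1)).filter (fun i => ω i ∈ B) :=
    Finset.filter_congr fun i hi => by
      rw [hag i (by simpa [Nat.lt_succ_iff] using hi)]
  rw [hfeq]

lemma detStart {n : ℕ} {A : Set (ℕ → V)} (hA : Det n A) (z : V) :
    Det n (A ∩ {ω | ω 0 = z}) := by
  intro ω ω' hag hω
  refine ⟨hA ω ω' hag hω.1, ?_⟩
  show ω' 0 = z
  rw [← hag 0 (Nat.zero_le n)]
  exact hω.2

lemma measurableSet_HitSet (G : Network V) (o : V) : MeasurableSet (HitSet o) := by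
  have hset : HitSet o = ⋃ n, {ω : ℕ → V | ω n ∈ ({o} : Set V)} := by
    ext ω
    simp [HitSet]
  rw [hset]
  exact MeasurableSet.iUnion fun n => G.measurableSet_coord n _

lemma measurableSet_NRet (G : Network V) (B : Set V) : MeasurableSet (NRet B) := by
  have hset : NRet B = ⋂ m, ⋂ (_ : 1 ≤ m), {ω : ℕ → V | ω m ∈ Bᶜ} := by
    ext ω
    simp [NRet]
  rw [hset]
  exact MeasurableSet.iInter fun m => MeasurableSet.iInter fun _ =>
    G.measurableSet_coord m _

lemma nret_compl (B : Set V) : NRet B = (RetAll B)ᶜ := by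
  ext ω
  simp [NRet, RetAll]

/-! #### Set-theoretic decompositions -/

lemma fh_disjoint (o : V) : Pairwise (Function.onFun Disjoint (FH (V := V) o)) := by
  intro j j' hne
  show Disjoint (FH o j) (FH o j')
  rcases hne.lt_or_gt with hlt | hlt
  · rw [Set.disjoint_left]
    intro ω hω hω'
    exact hω'.2 j hlt hω.1
  · rw [Set.disjoint_left]
    intro ω hω hω'
    exact hω.2 j' hlt hω'.1

lemma hit_eq_iUnion (o : V) : HitSet o = ⋃ j, FH o j := by
  ext ω
  simp only [Set.mem_iUnion]
  constructor
  · rintro ⟨n, hn⟩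
    have hex : ∃ j, ω j = o := ⟨n, hn⟩
    exact ⟨Nat.find hex, Nat.find_spec hex, fun i hi => Nat.find_min hex hi⟩
  · rintro ⟨j, hj⟩
    exact ⟨j, hj.1⟩

lemma coord_eq_firsthit (o : V) (n : ℕ) :
    coordEv n o = ⋃ j ∈ Finset.range (n + 1), (FH o j ∩ shft j ⁻¹' coordEv (n - j) o) := by
  ext ω
  simp only [Set.mem_iUnion, exists_prop, Finset.mem_range, Nat.lt_succ_iff]
  constructor
  · intro hω
    have hex : ∃ j, ω j = o := ⟨n, hω⟩
    refine ⟨Nat.find hex, Nat.find_min' hex hω,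
      ⟨Nat.find_spec hex, fun i hi => Nat.find_min hex hi⟩, ?_⟩
    show ω ((n - Nat.find hex) + Nat.find hex) = o
    rw [show (n - Nat.find hex) + Nat.find hex = n by
      have := Nat.find_min' hex hω
      omega]
    exact hω
  · rintro ⟨j, hj, _, hsh⟩
    have : ω ((n - j) + j) = o := hsh
    rwa [show (n - j) + j = n by omega] at this

lemma ret_disjoint (B : Set V) : Pairwise (Function.onFun Disjoint (RET (V := V) B)) := by
  intro j j' hne
  show Disjoint (RET B j) (RET B j')
  rcases hne.lt_or_gt with hlt | hlt
  · rw [Set.disjoint_left]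
    intro ω hω hω'
    exact hω'.2.2 j hω.1 hlt hω.2.1
  · rw [Set.disjoint_left]
    intro ω hω hω'
    exact hω.2.2 j' hω'.1 hlt hω'.2.1

lemma retall_eq_iUnion (B : Set V) : RetAll B = ⋃ j, RET (V := V) B j := by
  ext ω
  simp only [Set.mem_iUnion]
  constructor
  · rintro ⟨m, hm1, hm2⟩
    have hex : ∃ j, 1 ≤ j ∧ ω j ∈ B := ⟨m, hm1, hm2⟩
    refine ⟨Nat.find hex, (Nat.find_spec hex).1, (Nat.find_spec hex).2, ?_⟩
    intro i h1 h2
    intro hiB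
    exact Nat.find_min hex h2 ⟨h1, hiB⟩
  · rintro ⟨j, hj⟩
    exact ⟨j, hj.1, hj.2.1⟩

lemma coord_eq_ret (B : Set V) (o : V) (n : ℕ) :
    coordEv n o = VE B o n ∪
      ⋃ j ∈ Finset.range (n + 1), (RET B j ∩ shft j ⁻¹' coordEv (n - j) o) := by
  ext ω
  simp only [Set.mem_union, Set.mem_iUnion, exists_prop, Finset.mem_range, Nat.lt_succ_iff]
  constructor
  · intro hω
    by_cases hB : ∃ m, 1 ≤ m ∧ m ≤ n ∧ ω m ∈ B
    · right
      set q := fun j => 1 ≤ j ∧ j ≤ n ∧ ω j ∈ B with hq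
      have hfind := Nat.find_spec hB
      refine ⟨Nat.find hB, hfind.2.1, ⟨hfind.1, hfind.2.2, ?_⟩, ?_⟩
      · intro i h1 h2 hiB
        exact Nat.find_min hB h2 ⟨h1, by omega, hiB⟩
      · show ω ((n - Nat.find hB) + Nat.find hB) = o
        rw [show (n - Nat.find hB) + Nat.find hB = n by
          have := hfind.2.1
          omega]
        exact hω
    · left
      push_neg at hB
      exact ⟨hω, fun m h1 h2 => hB m h1 h2⟩
  · rintro (hVE | ⟨j, hj, _, hsh⟩)
    · exact hVE.1
    · have : ω ((n - j) + j) = o := hsh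
      rwa [show (n - j) + j = n by omega] at this

lemma ve_disjoint_ret (B : Set V) (o : V) (n j : ℕ) :
    Disjoint (VE B o n) (RET B j ∩ shft j ⁻¹' coordEv (n - j) o) ∨ n < j := by
  rcases le_or_gt j n with hj | hj
  · left
    rw [Set.disjoint_left]
    intro ω hω hω'
    exact hω.2 j hω'.1.1 hj hω'.1.2.1
  · right
    exact hj

/-! #### The Green function identity -/

lemma green_eq (G : Network V) (z o : V) :
    (∑' n, G.μ z (coordEv n o))
      = G.μ z (HitSet o) * ∑' m, G.μ o (coordEv m o) := by
  have hdec : ∀ n, G.μ z (coordEv n o)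
      = ∑ j ∈ Finset.range (n + 1), G.μ z (FH o j ∩ shft j ⁻¹' coordEv (n - j) o) := by
    intro n
    rw [coord_eq_firsthit o n]
    refine measure_biUnion_finset ?_ ?_
    · intro j _ j' _ hne
      exact Disjoint.mono Set.inter_subset_left Set.inter_subset_left (fh_disjoint o hne)
    · intro j _
      exact (G.det_measurableSet (detFH o j)).inter
        ((measurable_shft j) (G.det_measurableSet (detCoord (n - j) o)))
  have hpiece : ∀ j m, G.μ z (FH o j ∩ shft j ⁻¹' coordEv m o)
      = G.μ z (FH o j) * G.μ o (coordEv m o) := by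
    intro j m
    rw [G.markov_det z (detFH o j) (G.det_measurableSet (detCoord m o)),
      G.measure_det z (detFH o j), ← ENNReal.tsum_mul_right]
    refine tsum_congr fun w => ?_
    rw [w.2.2.1]
  calc (∑' n, G.μ z (coordEv n o))
      = ∑' n, ∑ j ∈ Finset.range (n + 1), (G.μ z (FH o j) * G.μ o (coordEv (n - j) o)) := by
        refine tsum_congr fun n => ?_
        rw [hdec n]
        exact Finset.sum_congr rfl fun j _ => hpiece j (n - j)
    _ = ∑' j, ∑' m, G.μ z (FH o j) * G.μ o (coordEv m o) :=
        cauchy_prod (fun j m => G.μ z (FH o j) * G.μ o (coordEv m o))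
    _ = (∑' j, G.μ z (FH o j)) * ∑' m, G.μ o (coordEv m o) := by
        rw [← ENNReal.tsum_mul_right]
        exact tsum_congr fun j => ENNReal.tsum_mul_left
    _ = G.μ z (HitSet o) * ∑' m, G.μ o (coordEv m o) := by
        rw [hit_eq_iUnion o,
          measure_iUnion (fh_disjoint o) (fun j => G.det_measurableSet (detFH o j))]

end Network

/-- Let `G` be a transient network with fixed vertex `o`, let
`h v` be the probability of ever visiting `o` from `v`, let `l ∈ (0,1)` and
`B = {v : h v = l}`. If random walk from `o` visits `B` almost surely, then it
almost surely visits `B` only finitely often, and the distribution of the first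
vertex of `B` visited coincides with that of the last vertex of `B` visited. -/
theorem first_eq_last_visit_distribution {V : Type*} [Countable V] [MeasurableSpace V]
    (G : Network V) (hT : G.Transient) (o : V)
    (h : V → ℝ) (hdef : ∀ v, h v = G.hitProb v o)
    (l : ℝ) (hl : l ∈ Set.Ioo (0 : ℝ) 1)
    (B : Set V) (hB : B = {v | h v = l})
    (hvisit : G.μ o {ω : ℕ → V | ∃ n, ω n ∈ B} = 1) :
    (∀ᵐ ω ∂ G.μ o, {n : ℕ | ω n ∈ B}.Finite) ∧
    (∀ b ∈ B, G.μ o (Network.firstVisitAt B b) = G.μ o (Network.lastVisitAt B b)) := by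
  haveI := G.μ_prob o
  -- hitting probability is `l` on `B`
  have hEB : ∀ v ∈ B, G.μ v (Network.HitSet o) = ENNReal.ofReal l := by
    intro v hv
    haveI := G.μ_prob v
    have h1 : (G.μ v (Network.HitSet o)).toReal = l := by
      have h2 : h v = l := by rw [hB] at hv; exact hv
      rw [hdef v] at h2
      exact h2
    rw [← h1, ENNReal.ofReal_toReal (measure_ne_top _ _)]
  have hGoo : (∑' n, G.μ o (Network.coordEv n o)) ≠ ⊤ := hT o
  -- Borel-Cantelli for visits to `o`
  have hmeasHitge : ∀ K : ℕ, MeasurableSet {ω : ℕ → V | ∃ m, K ≤ m ∧ ω m = o} := by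
    intro K
    have hset : {ω : ℕ → V | ∃ m, K ≤ m ∧ ω m = o}
        = ⋃ m, ⋃ (_ : K ≤ m), {ω : ℕ → V | ω m ∈ ({o} : Set V)} := by
      ext ω; simp
    rw [hset]
    exact MeasurableSet.iUnion fun m => MeasurableSet.iUnion fun _ =>
      G.measurableSet_coord m {o}
  have hBC : Tendsto (fun K => G.μ o {ω : ℕ → V | ∃ m, K ≤ m ∧ ω m = o}) atTop (𝓝 0) := by
    have hlim0 : G.μ o (⋂ K, {ω : ℕ → V | ∃ m, K ≤ m ∧ ω m = o}) = 0 := by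
      have hbc := MeasureTheory.measure_limsup_atTop_eq_zero
        (μ := G.μ o) (s := fun m => {ω : ℕ → V | ω m = o}) (by exact hT o)
      have hset : (⋂ K, {ω : ℕ → V | ∃ m, K ≤ m ∧ ω m = o})
          = Filter.limsup (fun m => {ω : ℕ → V | ω m = o}) Filter.atTop := by
        rw [Filter.limsup_eq_iInf_iSup_of_nat]
        ext ω
        simp
      rw [hset]
      exact hbc
    have htend := MeasureTheory.tendsto_measure_iInter_atTop (μ := G.μ o)
      (fun K => (hmeasHitge K).nullMeasurableSet)
      (fun K K' hKK' ω hω => by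
        obtain ⟨m, hm, hmo⟩ := hω
        exact ⟨m, le_trans hKK' hm, hmo⟩)
      ⟨0, measure_ne_top _ _⟩
    rwa [hlim0] at htend
  -- `k`-th visit events
  have hKVdisj : ∀ k : ℕ, Pairwise (Function.onFun Disjoint fun n => Network.KV B (k + 1) n) := by
    intro k
    have key : ∀ n n', n < n' →
        Disjoint (Network.KV B (k + 1) n) (Network.KV B (k + 1) n') := by
      intro n n' hlt
      rw [Set.disjoint_left]
      rintro ω ⟨h1, h2⟩ ⟨h1', h2'⟩
      have hsub : (Finset.range (n + 1)).filter (fun i => ω i ∈ B)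
          ⊂ (Finset.range (n' + 1)).filter (fun i => ω i ∈ B) := by
        refine (Finset.ssubset_iff_of_subset (Finset.filter_subset_filter _
          (Finset.range_subset_range.mpr (by omega)))).mpr ?_
        refine ⟨n', Finset.mem_filter.mpr ⟨Finset.mem_range.mpr (by omega), h1'⟩, ?_⟩
        intro hmem
        have := Finset.mem_range.mp (Finset.mem_filter.mp hmem).1
        omega
      have hcard := Finset.card_lt_card hsub
      omega
    intro n n' hne
    show Disjoint (Network.KV B (k + 1) n) (Network.KV B (k + 1) n')
    rcases hne.lt_or_gt with hlt | hlt
    · exact key _ _ hlt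
    · exact (key _ _ hlt).symm
  have hQle : ∀ k : ℕ, ENNReal.ofReal l * G.μ o (⋃ n, Network.KV B (k + 1) n)
      ≤ G.μ o {ω : ℕ → V | ∃ m, k ≤ m ∧ ω m = o} := by
    intro k
    have hmeasKV : ∀ n, MeasurableSet (Network.KV B (k + 1) n) :=
      fun n => G.det_measurableSet (Network.detKV B (k + 1) n)
    have hptw : ∀ n, G.μ o (Network.KV B (k + 1) n ∩ Network.shft n ⁻¹' Network.HitSet o)
        = ENNReal.ofReal l * G.μ o (Network.KV B (k + 1) n) := by
      intro n
      rw [G.markov_det o (Network.detKV B (k + 1) n) (G.measurableSet_HitSet o),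
        G.measure_det o (Network.detKV B (k + 1) n), ← ENNReal.tsum_mul_left]
      refine tsum_congr fun w => ?_
      rw [hEB _ w.2.2.1, mul_comm]
    calc ENNReal.ofReal l * G.μ o (⋃ n, Network.KV B (k + 1) n)
        = ENNReal.ofReal l * ∑' n, G.μ o (Network.KV B (k + 1) n) := by
          rw [measure_iUnion (hKVdisj k) hmeasKV]
      _ = ∑' n, G.μ o (Network.KV B (k + 1) n ∩ Network.shft n ⁻¹' Network.HitSet o) := by
          rw [← ENNReal.tsum_mul_left]
          exact tsum_congr fun n => (hptw n).symm
      _ = G.μ o (⋃ n, (Network.KV B (k + 1) n ∩ Network.shft n ⁻¹' Network.HitSet o)) := by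
          rw [measure_iUnion ?_ (fun n => (hmeasKV n).inter
            ((Network.measurable_shft n) (G.measurableSet_HitSet o)))]
          intro n n' hne
          exact Disjoint.mono Set.inter_subset_left Set.inter_subset_left (hKVdisj k hne)
      _ ≤ G.μ o {ω : ℕ → V | ∃ m, k ≤ m ∧ ω m = o} := by
          refine measure_mono ?_
          intro ω hω
          obtain ⟨n, hω⟩ := Set.mem_iUnion.mp hω
          obtain ⟨⟨hB1, hB2⟩, hsh⟩ := hω
          obtain ⟨m, hm⟩ := hsh
          have hcard : k + 1 ≤ n + 1 := by
            calc k + 1 = ((Finset.range (n + 1)).filter (fun i => ω i ∈ B)).card := hB2.symm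
            _ ≤ (Finset.range (n + 1)).card := Finset.card_filter_le _ _
            _ = n + 1 := Finset.card_range _
          exact ⟨m + n, by omega, hm⟩
  -- finitely many visits to B
  have hInf0 : G.μ o {ω : ℕ → V | ¬ ({n : ℕ | ω n ∈ B}).Finite} = 0 := by
    have hsub : ∀ k : ℕ, {ω : ℕ → V | ¬ ({n : ℕ | ω n ∈ B}).Finite}
        ⊆ ⋃ n, Network.KV B (k + 1) n := by
      intro k ω hω
      have hinf : ({n : ℕ | ω n ∈ B}).Infinite := hω
      have hnth : ω (Nat.nth (fun n => ω n ∈ B) k) ∈ B :=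
        Nat.nth_mem_of_infinite hinf k
      refine Set.mem_iUnion.mpr ⟨Nat.nth (fun n => ω n ∈ B) k, hnth, ?_⟩
      rw [← Nat.count_eq_card_filter_range]
      rw [Nat.count_succ, if_pos hnth, Nat.count_nth (fun hf => absurd hf hinf)]
    have hineq : ∀ k : ℕ, ENNReal.ofReal l * G.μ o {ω : ℕ → V | ¬ ({n : ℕ | ω n ∈ B}).Finite}
        ≤ G.μ o {ω : ℕ → V | ∃ m, k ≤ m ∧ ω m = o} := fun k =>
      le_trans (mul_le_mul_right (measure_mono (hsub k)) _) (hQle k)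
    have hle0 : ENNReal.ofReal l * G.μ o {ω : ℕ → V | ¬ ({n : ℕ | ω n ∈ B}).Finite} ≤ 0 :=
      ge_of_tendsto hBC (Filter.Eventually.of_forall hineq)
    have h00 := le_antisymm hle0 zero_le
    rcases mul_eq_zero.mp h00 with hcase | hcase
    · exact absurd hcase (by simp [ENNReal.ofReal_eq_zero, not_le, hl.1])
    · exact hcase
  refine ⟨by rw [MeasureTheory.ae_iff]; exact hInf0, fun b hb => ?_⟩
  -- Part 2
  haveI := G.μ_prob b
  set l' := ENNReal.ofReal l with hl'
  set Goo := ∑' n, G.μ o (Network.coordEv n o) with hGoodef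
  have hGboEq : (∑' n, G.μ b (Network.coordEv n o)) = l' * Goo := by
    rw [Network.green_eq G b o, hEB b hb]
  have hGvo : ∀ v ∈ B, (∑' n, G.μ v (Network.coordEv n o)) = l' * Goo := by
    intro v hv
    rw [Network.green_eq G v o, hEB v hv]
  set U := ∑' n, G.μ b (Network.VE B o n) with hU
  have key2 : (∑' n, G.μ b (Network.coordEv n o))
      = U + G.μ b (Network.RetAll B) * (l' * Goo) := by
    have hdec : ∀ n, G.μ b (Network.coordEv n o)
        = G.μ b (Network.VE B o n)
          + ∑ j ∈ Finset.range (n + 1),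
              G.μ b (Network.RET B j ∩ Network.shft j ⁻¹' Network.coordEv (n - j) o) := by
      intro n
      rw [Network.coord_eq_ret B o n]
      rw [measure_union ?_ ?_]
      · congr 1
        refine measure_biUnion_finset ?_ ?_
        · intro j _ j' _ hne
          exact Disjoint.mono Set.inter_subset_left Set.inter_subset_left
            (Network.ret_disjoint B hne)
        · intro j _
          exact (G.det_measurableSet (Network.detRET B j)).inter
            ((Network.measurable_shft j) (G.det_measurableSet (Network.detCoord (n - j) o)))
      · refine Set.disjoint_iUnion_right.mpr fun j => Set.disjoint_iUnion_right.mpr fun hj => ?_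
        rcases Network.ve_disjoint_ret B o n j with hd | hlt
        · exact hd
        · exact absurd (Finset.mem_range.mp hj) (by omega)
      · exact MeasurableSet.biUnion (Finset.range (n + 1)).countable_toSet
          (fun j _ => (G.det_measurableSet (Network.detRET B j)).inter
            ((Network.measurable_shft j) (G.det_measurableSet (Network.detCoord (n - j) o))))
    calc (∑' n, G.μ b (Network.coordEv n o))
        = ∑' n, (G.μ b (Network.VE B o n)
            + ∑ j ∈ Finset.range (n + 1),
                G.μ b (Network.RET B j ∩ Network.shft j ⁻¹' Network.coordEv (n - j) o)) :=
          tsum_congr hdec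
      _ = U + ∑' n, ∑ j ∈ Finset.range (n + 1),
            G.μ b (Network.RET B j ∩ Network.shft j ⁻¹' Network.coordEv (n - j) o) :=
          ENNReal.tsum_add
      _ = U + ∑' j, ∑' m, G.μ b (Network.RET B j ∩ Network.shft j ⁻¹' Network.coordEv m o) := by
          rw [Network.cauchy_prod
            (fun j m => G.μ b (Network.RET B j ∩ Network.shft j ⁻¹' Network.coordEv m o))]
      _ = U + G.μ b (Network.RetAll B) * (l' * Goo) := by
          congr 1
          have hj : ∀ j, (∑' m, G.μ b (Network.RET B j ∩ Network.shft j ⁻¹' Network.coordEv m o))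
              = G.μ b (Network.RET B j) * (l' * Goo) := by
            intro j
            have h1 : ∀ m, G.μ b (Network.RET B j ∩ Network.shft j ⁻¹' Network.coordEv m o)
                = ∑' w : ↥(Network.Wset j ∩ Network.RET B j),
                    G.pp b j (w : ℕ → V) * G.μ ((w : ℕ → V) j) (Network.coordEv m o) :=
              fun m => G.markov_det b (Network.detRET B j)
                (G.det_measurableSet (Network.detCoord m o))
            rw [tsum_congr h1, ENNReal.tsum_comm]
            calc ∑' w : ↥(Network.Wset j ∩ Network.RET B j),
                  ∑' m, G.pp b j (w : ℕ → V) * G.μ ((w : ℕ → V) j) (Network.coordEv m o)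
                = ∑' w : ↥(Network.Wset j ∩ Network.RET B j),
                    G.pp b j (w : ℕ → V) * (l' * Goo) := by
                  refine tsum_congr fun w => ?_
                  rw [ENNReal.tsum_mul_left, hGvo ((w : ℕ → V) j) w.2.2.2.1]
              _ = G.μ b (Network.RET B j) * (l' * Goo) := by
                  rw [ENNReal.tsum_mul_right, ← G.measure_det b (Network.detRET B j)]
          rw [tsum_congr hj, ENNReal.tsum_mul_right, Network.retall_eq_iUnion B,
            measure_iUnion (Network.ret_disjoint B)
              (fun j => G.det_measurableSet (Network.detRET B j))]
  set esc := G.μ b (Network.NRet B) with hescdef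
  have key3 : G.μ b (Network.RetAll B) + esc = 1 := by
    have hmeasRA : MeasurableSet (Network.RetAll B) := by
      rw [show Network.RetAll B = (Network.NRet B)ᶜ from by
        rw [Network.nret_compl B, compl_compl]]
      exact (G.measurableSet_NRet B).compl
    rw [hescdef, Network.nret_compl B, measure_add_measure_compl hmeasRA, measure_univ]
  have hfinGoo : Goo ≠ ⊤ := hT o
  have hfin : l' * Goo ≠ ⊤ := ENNReal.mul_ne_top ENNReal.ofReal_ne_top hfinGoo
  have keyU : U = (l' * Goo) * esc := by
    have h1 : U + G.μ b (Network.RetAll B) * (l' * Goo)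
        = (l' * Goo) * esc + G.μ b (Network.RetAll B) * (l' * Goo) := by
      rw [← key2, hGboEq, mul_comm (G.μ b (Network.RetAll B)) (l' * Goo), ← mul_add,
        add_comm esc (G.μ b (Network.RetAll B)), key3, mul_one]
    exact WithTop.add_right_cancel (ENNReal.mul_ne_top (measure_ne_top _ _) hfin) h1
  -- the first-visit side
  have hfirstUnion : Network.firstVisitAt B b = ⋃ n, Network.FP B b n := by
    ext ω
    simp [Network.firstVisitAt, Network.FP]
  have hFPdisj : Pairwise (Function.onFun Disjoint (Network.FP B b)) := by
    have key : ∀ n n', n < n' → Disjoint (Network.FP B b n) (Network.FP B b n') := by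
      intro n n' hlt
      rw [Set.disjoint_left]
      rintro ω ⟨h1, h2⟩ ⟨h1', h2'⟩
      exact h2' n hlt (h1 ▸ hb)
    intro n n' hne
    show Disjoint (Network.FP B b n) (Network.FP B b n')
    rcases hne.lt_or_gt with hlt | hlt
    · exact key _ _ hlt
    · exact (key _ _ hlt).symm
  have hfirst : G.μ o (Network.firstVisitAt B b) = ∑' n, G.μ o (Network.FP B b n) := by
    rw [hfirstUnion]
    exact measure_iUnion hFPdisj (fun n => G.det_measurableSet (Network.detFP B b n))
  have hrevF : ∀ n, G.piE o * G.μ o (Network.FP B b n)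
      = G.piE b * G.μ b (Network.VE B o n) := by
    intro n
    rw [G.measure_inter_start o (Network.FP B b n), G.measure_inter_start b (Network.VE B o n)]
    refine G.rev_measure (Network.detStart (Network.detFP B b n) o)
      (Network.detStart (Network.detVE B o n) b) ?_ ?_
    · rintro w ⟨hwW, ⟨hwn, hwav⟩, hw0⟩
      have hw0' : w 0 = o := hw0
      refine ⟨hw0', hwn, ⟨⟨?_, ?_⟩, ?_⟩⟩
      · show Network.rv n w n = o
        rw [Network.rv_apply le_rfl w, Nat.sub_self]
        exact hw0'
      · intro m h1 h2
        rw [Network.rv_apply h2 w]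
        exact hwav (n - m) (by omega)
      · show Network.rv n w 0 = b
        rw [Network.rv_apply (Nat.zero_le n) w, Nat.sub_zero]
        exact hwn
    · rintro w ⟨hwW, ⟨hwn, hwav⟩, hw0⟩
      have hw0' : w 0 = b := hw0
      refine ⟨hw0', hwn, ⟨⟨?_, ?_⟩, ?_⟩⟩
      · show Network.rv n w n = b
        rw [Network.rv_apply le_rfl w, Nat.sub_self]
        exact hw0'
      · intro m hm
        rw [Network.rv_apply hm.le w]
        exact hwav (n - m) (by omega) (by omega)
      · show Network.rv n w 0 = o
        rw [Network.rv_apply (Nat.zero_le n) w, Nat.sub_zero]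
        exact hwn
  -- the last-visit side
  have hlastUnion : Network.lastVisitAt B b
      = ⋃ n, (Network.coordEv n b ∩ Network.shft n ⁻¹' Network.NRet B) := by
    ext ω
    simp only [Network.lastVisitAt, Network.coordEv, Network.NRet, Network.shft,
      Set.mem_setOf_eq, Set.mem_iUnion, Set.mem_inter_iff, Set.mem_preimage]
    constructor
    · rintro ⟨n, h1, h2⟩
      exact ⟨n, h1, fun m hm => h2 (m + n) (by omega)⟩
    · rintro ⟨n, h1, h2⟩
      refine ⟨n, h1, fun m hm => ?_⟩
      have h3 := h2 (m - n) (by omega)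
      rwa [show m - n + n = m by omega] at h3
  have hLPdisj : Pairwise (Function.onFun Disjoint fun n =>
      Network.coordEv n b ∩ Network.shft n ⁻¹' Network.NRet B) := by
    have key : ∀ n n', n < n' → Disjoint
        (Network.coordEv n b ∩ Network.shft n ⁻¹' Network.NRet B)
        (Network.coordEv n' b ∩ Network.shft n' ⁻¹' Network.NRet B) := by
      intro n n' hlt
      rw [Set.disjoint_left]
      rintro ω ⟨h1, h2⟩ ⟨h1', h2'⟩
      have h3 := h2 (n' - n) (by omega)
      apply h3
      show ω ((n' - n) + n) ∈ B
      rw [show (n' - n) + n = n' by omega]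
      have h1'' : ω n' = b := h1'
      rw [h1'']
      exact hb
    intro n n' hne
    show Disjoint _ _
    rcases hne.lt_or_gt with hlt | hlt
    · exact key _ _ hlt
    · exact (key _ _ hlt).symm
  have hlast : G.μ o (Network.lastVisitAt B b)
      = (∑' n, G.μ o (Network.coordEv n b)) * esc := by
    rw [hlastUnion, measure_iUnion hLPdisj (fun n =>
      (G.det_measurableSet (Network.detCoord n b)).inter
        ((Network.measurable_shft n) (G.measurableSet_NRet B))), ← ENNReal.tsum_mul_right]
    refine tsum_congr fun n => ?_
    rw [G.markov_det o (Network.detCoord n b) (G.measurableSet_NRet B),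
      G.measure_det o (Network.detCoord n b), ← ENNReal.tsum_mul_right]
    refine tsum_congr fun w => ?_
    have hwn : (w : ℕ → V) n = b := w.2.2
    rw [hwn, ← hescdef]
  have hrevG : G.piE o * (∑' n, G.μ o (Network.coordEv n b))
      = G.piE b * (∑' n, G.μ b (Network.coordEv n o)) := by
    rw [← ENNReal.tsum_mul_left, ← ENNReal.tsum_mul_left]
    refine tsum_congr fun n => ?_
    rw [G.measure_inter_start o (Network.coordEv n b),
      G.measure_inter_start b (Network.coordEv n o)]
    refine G.rev_measure (Network.detStart (Network.detCoord n b) o)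
      (Network.detStart (Network.detCoord n o) b) ?_ ?_
    · rintro w ⟨hwW, hwn, hw0⟩
      have hw0' : w 0 = o := hw0
      have hwn' : w n = b := hwn
      refine ⟨hw0', hwn', ⟨?_, ?_⟩⟩
      · show Network.rv n w n = o
        rw [Network.rv_apply le_rfl w, Nat.sub_self]
        exact hw0'
      · show Network.rv n w 0 = b
        rw [Network.rv_apply (Nat.zero_le n) w, Nat.sub_zero]
        exact hwn'
    · rintro w ⟨hwW, hwn, hw0⟩
      have hw0' : w 0 = b := hw0
      have hwn' : w n = o := hwn
      refine ⟨hw0', hwn', ⟨?_, ?_⟩⟩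
      · show Network.rv n w n = b
        rw [Network.rv_apply le_rfl w, Nat.sub_self]
        exact hw0'
      · show Network.rv n w 0 = o
        rw [Network.rv_apply (Nat.zero_le n) w, Nat.sub_zero]
        exact hwn'
  -- conclusion
  have hchain1 : G.piE o * G.μ o (Network.firstVisitAt B b) = G.piE b * U := by
    rw [hfirst, ← ENNReal.tsum_mul_left, tsum_congr hrevF, ENNReal.tsum_mul_left]
  have hchain2 : G.piE o * G.μ o (Network.lastVisitAt B b) = G.piE b * U := by
    rw [hlast, ← mul_assoc, hrevG, mul_assoc, hGboEq, ← keyU]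
  exact (ENNReal.mul_right_inj (G.piE_ne_zero o) (G.piE_ne_top o)).mp
    (hchain1.trans hchain2.symm)
end
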